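/- arXiv:1305.0808 — 7 statements merged into one kernel-verified Lean document; each statement's English description precedes it below -/
import Mathlib

section
/- Let G=(V,E) be a simple graph in which every vertex has degree at most d, and let n ≥ d+2. Let C_n ⊆ {1,…,n}^V be the set of proper vertex n-colorings of G, i.e. maps x with x_v ≠ x_w whenever (v,w) ∈ E. Then C_n has the pivot property: for any x,y ∈ C_n which differ at only finitely many vertices, there exists a finite sequence x = x⁽¹⁾, x⁽²⁾, …, x⁽ᵏ⁾ = y of elements of C_n such that each consecutive pair x⁽ⁱ⁾, x⁽ⁱ⁺¹⁾ differs at exactly one vertex. -/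
section Aux

variable {V : Type*} (G : SimpleGraph V) (n : ℕ)

/-- Reachability by single-vertex recolorings through proper colorings. -/
def PReach (x y : V → Fin n) : Prop :=
  ∃ (k : ℕ) (c : ℕ → V → Fin n),
    c 0 = x ∧ c k = y ∧
    (∀ i ≤ k, ∀ v w : V, G.Adj v w → c i v ≠ c i w) ∧
    (∀ i < k, ∃! v : V, c i v ≠ c (i + 1) v)

variable {G n}

lemma preach_refl {x : V → Fin n} (hx : ∀ v w, G.Adj v w → x v ≠ x w) :
    PReach G n x x :=
  ⟨0, fun _ => x, rfl, rfl, fun _ _ => hx, fun i hi => absurd hi (Nat.not_lt_zero i)⟩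

lemma preach_trans {x y z : V → Fin n} (h1 : PReach G n x y) (h2 : PReach G n y z) :
    PReach G n x z := by
  obtain ⟨k1, c1, h10, h1k, h1p, h1s⟩ := h1
  obtain ⟨k2, c2, h20, h2k, h2p, h2s⟩ := h2
  refine ⟨k1 + k2, fun i => if i ≤ k1 then c1 i else c2 (i - k1), by simp [h10], ?_, ?_, ?_⟩
  · by_cases h : k2 = 0
    · subst h; simpa using h1k.trans (h20 ▸ h2k.symm).symm
    · simp only [add_le_iff_nonpos_right, Nat.le_zero, h, if_false]
      rw [Nat.add_sub_cancel_left, h2k]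
  · intro i hi v w hvw
    by_cases h : i ≤ k1
    · simpa [h] using h1p i h v w hvw
    · simp only [h, if_false]
      exact h2p (i - k1) (by omega) v w hvw
  · intro i hi
    rcases lt_trichotomy i k1 with h | h | h
    · have hi1 : i + 1 ≤ k1 := h
      simpa [h.le, hi1] using h1s i h
    · subst h
      have hk2 : 0 < k2 := by omega
      have he : c1 i = c2 0 := by rw [h1k, ← h20]
      have : ¬ (i + 1 ≤ i) := by omega
      simpa [le_refl, this, Nat.add_sub_cancel_left, he] using h2s 0 hk2
    · have h1 : ¬ (i ≤ k1) := by omega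
      have h2' : ¬ (i + 1 ≤ k1) := by omega
      have he : i + 1 - k1 = (i - k1) + 1 := by omega
      simpa [h1, h2', he] using h2s (i - k1) (by omega)

lemma preach_single {x y : V → Fin n}
    (hx : ∀ v w, G.Adj v w → x v ≠ x w) (hy : ∀ v w, G.Adj v w → y v ≠ y w)
    (h : ∃! v : V, x v ≠ y v) : PReach G n x y := by
  refine ⟨1, fun i => if i = 0 then x else y, rfl, rfl, ?_, ?_⟩
  · intro i _ v w hvw
    by_cases h0 : i = 0 <;> simp [h0, hx v w hvw, hy v w hvw]
  · intro i hi
    have : i = 0 := by omega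
    subst this
    simpa using h

end Aux

section Main

variable {V : Type*} {G : SimpleGraph V} {d n : ℕ}

lemma exists_good_color
    (hdeg : ∀ v : V, (G.neighborSet v).ncard ≤ d) (hn : d + 2 ≤ n)
    (hfin : ∀ v : V, (G.neighborSet v).Finite)
    (x : V → Fin n) (w : V) (a : Fin n) :
    ∃ c : Fin n, c ≠ a ∧ ∀ u, G.Adj w u → c ≠ x u := by
  classical
  set T : Finset (Fin n) := (hfin w).toFinset.image x ∪ {a} with hT
  have hcard : T.card < Fintype.card (Fin n) := by
    have h1 : ((hfin w).toFinset.image x).card ≤ (hfin w).toFinset.card :=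
      Finset.card_image_le
    have h2 : (G.neighborSet w).ncard = (hfin w).toFinset.card :=
      Set.ncard_eq_toFinset_card _ (hfin w)
    have h3 : T.card ≤ ((hfin w).toFinset.image x).card + 1 :=
      (Finset.card_union_le _ _).trans (by simp)
    have := hdeg w
    simp only [Fintype.card_fin]
    omega
  have hex : ∃ c : Fin n, c ∉ T := by
    by_contra h
    push_neg at h
    have : T = Finset.univ := Finset.eq_univ_iff_forall.mpr h
    rw [this, Finset.card_univ] at hcard
    exact lt_irrefl _ hcard
  obtain ⟨c, hc⟩ := hex
  simp only [hT, Finset.mem_union, Finset.mem_singleton, Finset.mem_image,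
    Set.Finite.mem_toFinset, SimpleGraph.mem_neighborSet, not_or, not_exists] at hc
  refine ⟨c, hc.2, fun u hu hc' => ?_⟩
  exact hc.1 u ⟨hu, hc'.symm⟩

lemma clear_neighbors [DecidableEq V]
    (hdeg : ∀ v : V, (G.neighborSet v).ncard ≤ d) (hn : d + 2 ≤ n)
    (hfin : ∀ v : V, (G.neighborSet v).Finite)
    (v : V) (a : Fin n) (S : Finset V) :
    ∀ (_ : ∀ w ∈ S, G.Adj v w) (x : V → Fin n),
      (∀ p q, G.Adj p q → x p ≠ x q) →
      ∃ x' : V → Fin n, PReach G n x x' ∧ (∀ p q, G.Adj p q → x' p ≠ x' q) ∧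
        (∀ u, x' u ≠ x u → u ∈ S ∧ x u = a) ∧ (∀ w ∈ S, x' w ≠ a) := by
  induction S using Finset.induction_on with
  | empty =>
    intro _ x hx
    exact ⟨x, preach_refl hx, hx, fun u h => absurd rfl h, fun w hw => absurd hw (by simp)⟩
  | @insert w S hwS ih =>
    intro hS x hx
    have hvw : G.Adj v w := hS w (Finset.mem_insert_self w S)
    -- Step 1: make sure the color at `w` differs from `a`.
    have step1 : ∃ x1 : V → Fin n, PReach G n x x1 ∧
        (∀ p q, G.Adj p q → x1 p ≠ x1 q) ∧ x1 w ≠ a ∧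
        (∀ u, u ≠ w → x1 u = x u) ∧ (x1 w ≠ x w → x w = a) := by
      by_cases hxw : x w = a
      · obtain ⟨c, hca, hcn⟩ := exists_good_color hdeg hn hfin x w a
        have hprop : ∀ p q, G.Adj p q →
            Function.update x w c p ≠ Function.update x w c q := by
          intro p q hpq
          rcases eq_or_ne p w with rfl | hp
          · have hq : q ≠ p := (G.ne_of_adj hpq).symm
            rw [Function.update_self, Function.update_of_ne hq]
            exact hcn q hpq
          · rw [Function.update_of_ne hp]
            rcases eq_or_ne q w with rfl | hq
            · rw [Function.update_self]
              exact fun h => hcn p (G.adj_symm hpq) h.symm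
            · rw [Function.update_of_ne hq]
              exact hx p q hpq
        have huniq : ∃! u : V, x u ≠ Function.update x w c u := by
          refine ⟨w, ?_, ?_⟩
          · show x w ≠ Function.update x w c w
            rw [Function.update_self, hxw]
            exact fun h => hca h.symm
          · intro u hu
            have hu' : x u ≠ Function.update x w c u := hu
            by_contra h
            rw [Function.update_of_ne h] at hu'
            exact hu' rfl
        refine ⟨Function.update x w c, preach_single hx hprop huniq, hprop, ?_, ?_,
          fun _ => hxw⟩
        · rw [Function.update_self]; exact hca
        · intro u hu; exact Function.update_of_ne hu _ _
      · exact ⟨x, preach_refl hx, hx, hxw, fun _ _ => rfl, fun h => absurd rfl h⟩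
    obtain ⟨x1, hr1, hx1, hx1w, hx1off, hx1chg⟩ := step1
    obtain ⟨x', hr2, hx', hchg, hcav⟩ :=
      ih (fun u hu => hS u (Finset.mem_insert_of_mem hu)) x1 hx1
    have hx'w : x' w = x1 w := by
      by_contra h
      exact hwS (hchg w h).1
    refine ⟨x', preach_trans hr1 hr2, hx', ?_, ?_⟩
    · intro u hu
      rcases eq_or_ne u w with rfl | huw
      · rw [hx'w] at hu
        exact ⟨Finset.mem_insert_self u S, hx1chg hu⟩
      · have h1 : x1 u = x u := hx1off u huw
        rw [← h1]
        obtain ⟨h2, h3⟩ := hchg u (by rw [h1]; exact hu)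
        exact ⟨Finset.mem_insert_of_mem h2, h3⟩
    · intro u hu
      rcases Finset.mem_insert.mp hu with rfl | hu'
      · rw [hx'w]; exact hx1w
      · exact hcav u hu'

lemma key_induction [DecidableEq V]
    (hfin : ∀ v : V, (G.neighborSet v).Finite)
    (hdeg : ∀ v : V, (G.neighborSet v).ncard ≤ d) (hn : d + 2 ≤ n) :
    ∀ N : ℕ, ∀ x y : V → Fin n,
      (∀ p q, G.Adj p q → x p ≠ x q) → (∀ p q, G.Adj p q → y p ≠ y q) →
      {v | x v ≠ y v}.Finite → {v | x v ≠ y v}.ncard ≤ N → PReach G n x y := by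
  intro N
  induction N with
  | zero =>
    intro x y hx hy hf hc
    have hD : {v | x v ≠ y v} = ∅ := by
      rw [← Set.ncard_eq_zero hf] at *
      omega
    have : x = y := by
      funext u
      by_contra h
      exact absurd (hD ▸ (h : u ∈ {v | x v ≠ y v})) (Set.notMem_empty u)
    exact this ▸ preach_refl hx
  | succ N ih =>
    intro x y hx hy hf hc
    by_cases hxy : x = y
    · exact hxy ▸ preach_refl hx
    · obtain ⟨v, hv⟩ := Function.ne_iff.mp hxy
      set S : Finset V := (hfin v).toFinset with hSdef
      have hS : ∀ w ∈ S, G.Adj v w := fun w hw => by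
        simpa [hSdef] using hw
      obtain ⟨x', hr1, hx', hchg, hcav⟩ :=
        clear_neighbors hdeg hn hfin v (y v) S hS x hx
      have hvv : x' v = x v := by
        by_contra h
        have h1 := (hchg v h).1
        rw [hSdef, Set.Finite.mem_toFinset, SimpleGraph.mem_neighborSet] at h1
        exact G.irrefl h1
      have hSmem : ∀ u, G.Adj v u → u ∈ S := by
        intro u hu
        rw [hSdef, Set.Finite.mem_toFinset]
        exact hu
      set x'' : V → Fin n := Function.update x' v (y v) with hx''def
      have hx''p : ∀ p q, G.Adj p q → x'' p ≠ x'' q := by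
        intro p q hpq
        rcases eq_or_ne p v with rfl | hp
        · have hq : q ≠ p := (G.ne_of_adj hpq).symm
          rw [hx''def, Function.update_self, Function.update_of_ne hq]
          exact fun h => hcav q (hSmem q hpq) h.symm
        · rw [hx''def, Function.update_of_ne hp]
          rcases eq_or_ne q v with rfl | hq
          · rw [Function.update_self]
            exact fun h => hcav p (hSmem p (G.adj_symm hpq)) h
          · rw [Function.update_of_ne hq]
            exact hx' p q hpq
      have hstep : PReach G n x' x'' := by
        have huniq : ∃! u : V, x' u ≠ x'' u := by
          refine ⟨v, ?_, ?_⟩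
          · show x' v ≠ x'' v
            rw [hx''def, Function.update_self, hvv]
            exact hv
          · intro u hu
            have hu' : x' u ≠ x'' u := hu
            by_contra h
            rw [hx''def, Function.update_of_ne h] at hu'
            exact hu' rfl
        exact preach_single hx' hx''p huniq
      have hsub : {u | x'' u ≠ y u} ⊆ {u | x u ≠ y u} \ {v} := by
        intro u hu
        rcases eq_or_ne u v with rfl | huv
        · have he : x'' u = y u := by
            rw [hx''def]; exact Function.update_self u (y u) x'
          exact absurd he hu
        · have h1 : x'' u = x' u := Function.update_of_ne huv _ _
          have hu' : x' u ≠ y u := by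
            have hu2 : x'' u ≠ y u := hu
            rwa [h1] at hu2
          refine ⟨?_, huv⟩
          by_cases h2 : x' u = x u
          · rw [h2] at hu'; exact hu'
          · obtain ⟨h3, h4⟩ := hchg u h2
            have hadj : G.Adj v u := hS u h3
            have h5 := hy v u hadj
            rw [← h4] at h5
            exact h5
      have hf'' : {u | x'' u ≠ y u}.Finite := hf.subset (hsub.trans Set.diff_subset)
      have hc'' : {u | x'' u ≠ y u}.ncard ≤ N := by
        have h1 : {u | x'' u ≠ y u}.ncard ≤ ({u | x u ≠ y u} \ {v}).ncard :=
          Set.ncard_le_ncard hsub hf.diff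
        have h2 : ({u | x u ≠ y u} \ {v}).ncard < {u | x u ≠ y u}.ncard :=
          Set.ncard_diff_singleton_lt_of_mem hv hf
        omega
      exact preach_trans (preach_trans hr1 hstep) (ih x'' y hx''p hy hf'' hc'')

end Main

/-- Let `G` be a simple graph with all degrees at most `d` and let
`n ≥ d + 2`. Then the space of proper `n`-colorings of `G` has the pivot property:
any two proper colorings differing at finitely many vertices are connected by a chain
of proper colorings in which consecutive colorings differ at exactly one vertex. -/
theorem colorings_pivot_property
    {V : Type*} (G : SimpleGraph V) (d n : ℕ)
    (hlf : ∀ v : V, (G.neighborSet v).Finite)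
    (hdeg : ∀ v : V, (G.neighborSet v).ncard ≤ d)
    (hn : d + 2 ≤ n)
    (x y : V → Fin n)
    (hx : ∀ v w : V, G.Adj v w → x v ≠ x w)
    (hy : ∀ v w : V, G.Adj v w → y v ≠ y w)
    (hdiff : {v | x v ≠ y v}.Finite) :
    ∃ (k : ℕ) (c : ℕ → V → Fin n),
      c 0 = x ∧ c k = y ∧
      (∀ i ≤ k, ∀ v w : V, G.Adj v w → c i v ≠ c i w) ∧
      (∀ i < k, ∃! v : V, c i v ≠ c (i + 1) v) := by
  classical
  exact key_induction hlf hdeg hn {v | x v ≠ y v}.ncard x y hx hy hdiff le_rfl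
end

section
/- Let A be a finite set and X ⊆ A^{ℤ^d} a shift-invariant topological Markov field with the pivot property. Then the ℝ-vector space M^σ_X of shift-invariant Markov cocycles on X is finite-dimensional; in fact its dimension is at most |B_{{0}∪∂{0}}(X)|², where B_W(X) denotes the set of restrictions of points of X to W. -/
open scoped BigOperators

/-- Sites of the standard Cayley graph of `ℤ^d`. -/
abbrev Site (d : ℕ) := Fin d → ℤ

/-- Adjacency in the standard Cayley graph of `ℤ^d`: `‖n - m‖₁ = 1`. -/
def adjacent {d : ℕ} (n m : Site d) : Prop :=
  (∑ i, |n i - m i|) = 1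

/-- The (outer) boundary of a set of sites. -/
def siteBdry {d : ℕ} (F : Set (Site d)) : Set (Site d) :=
  {m | m ∉ F ∧ ∃ n ∈ F, adjacent n m}

/-- The shift action of `ℤ^d` on configurations. -/
def shift {d : ℕ} {A : Type*} (n : Site d) (x : Site d → A) : Site d → A :=
  fun m => x (m + n)

/-- The homoclinic relation of `X`. -/
def DeltaOf {d : ℕ} {A : Type*} (X : Set (Site d → A)) :
    Set ((Site d → A) × (Site d → A)) :=
  {p | p.1 ∈ X ∧ p.2 ∈ X ∧ {n | p.1 n ≠ p.2 n}.Finite}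

/-- The cocycle condition for a function on the homoclinic relation. -/
def IsCocycle {d : ℕ} {A : Type*} (X : Set (Site d → A)) (M : ↥(DeltaOf X) → ℝ) : Prop :=
  ∀ (x y z : Site d → A) (hxy : (x, y) ∈ DeltaOf X)
    (hyz : (y, z) ∈ DeltaOf X) (hxz : (x, z) ∈ DeltaOf X),
    M ⟨(x, z), hxz⟩ = M ⟨(x, y), hxy⟩ + M ⟨(y, z), hyz⟩

/-- The Markov condition: if `x,y` agree outside the finite set `F`, then `M(x,y)` depends
only on the restrictions of `x` and `y` to `F ∪ ∂F`. -/
def IsMarkovProp {d : ℕ} {A : Type*} (X : Set (Site d → A)) (M : ↥(DeltaOf X) → ℝ) : Prop :=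
  ∀ (x y x' y' : Site d → A) (hxy : (x, y) ∈ DeltaOf X) (hxy' : (x', y') ∈ DeltaOf X)
    (F : Set (Site d)), F.Finite →
    (∀ n ∉ F, x n = y n) → (∀ n ∉ F, x' n = y' n) →
    (∀ n ∈ F ∪ siteBdry F, x n = x' n) → (∀ n ∈ F ∪ siteBdry F, y n = y' n) →
    M ⟨(x, y), hxy⟩ = M ⟨(x', y'), hxy'⟩

/-- Shift-invariance of a cocycle on the homoclinic relation. -/
def IsShiftInvCocycle {d : ℕ} {A : Type*} (X : Set (Site d → A)) (M : ↥(DeltaOf X) → ℝ) : Prop :=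
  ∀ (n : Site d) (x y : Site d → A) (hxy : (x, y) ∈ DeltaOf X)
    (hs : (shift n x, shift n y) ∈ DeltaOf X),
    M ⟨(shift n x, shift n y), hs⟩ = M ⟨(x, y), hxy⟩

/-- The window `{0} ∪ ∂{0}`. -/
abbrev SiteW (d : ℕ) : Set (Site d) := {(0 : Site d)} ∪ siteBdry {(0 : Site d)}

lemma siteW_finite (d : ℕ) : (SiteW d).Finite := by
  have h1 : (Set.pi Set.univ (fun _ : Fin d => ({-1, 0, 1} : Set ℤ))).Finite :=
    Set.Finite.pi (fun _ => (Set.toFinite _))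
  refine h1.subset ?_
  rintro m (hm | hm)
  · intro i _
    simp only [Set.mem_singleton_iff] at hm
    subst hm
    simp
  · obtain ⟨-, n, hn, hadj⟩ := hm
    simp only [Set.mem_singleton_iff] at hn
    subst hn
    intro i _
    have hle : |(0 : Site d) i - m i| ≤ ∑ j, |(0 : Site d) j - m j| :=
      Finset.single_le_sum (f := fun j => |(0 : Site d) j - m j|) (fun j _ => abs_nonneg _) (Finset.mem_univ i)
    rw [hadj] at hle
    simp only [Pi.zero_apply, zero_sub, abs_neg] at hle
    have := abs_le.mp hle
    simp only [Set.mem_insert_iff, Set.mem_singleton_iff]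
    omega

/-- The set of patterns on the window `{0} ∪ ∂{0}` appearing in `X`. -/
abbrev PattB {d : ℕ} {A : Type*} (X : Set (Site d → A)) : Set (↥(SiteW d) → A) :=
  {f | ∃ x ∈ X, ∀ m : ↥(SiteW d), f m = x m.val}

/-- Existence of a single-site pivot at the origin realizing the pair of patterns. -/
def PivCond {d : ℕ} {A : Type*} (X : Set (Site d → A))
    (pq : ↥(PattB X) × ↥(PattB X)) : Prop :=
  ∃ z : ↥(DeltaOf X),
    (∀ n : Site d, n ≠ 0 → z.1.1 n = z.1.2 n) ∧
    (∀ m : ↥(SiteW d), (pq.1 : ↥(SiteW d) → A) m = z.1.1 m.val) ∧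
    (∀ m : ↥(SiteW d), (pq.2 : ↥(SiteW d) → A) m = z.1.2 m.val)

open Classical

/-- Evaluation of a cocycle on a chosen pivot for each pair of patterns. -/
noncomputable def Phi {d : ℕ} {A : Type*} (X : Set (Site d → A)) :
    (↥(DeltaOf X) → ℝ) →ₗ[ℝ] ((↥(PattB X) × ↥(PattB X)) → ℝ) where
  toFun M := fun pq => if h : PivCond X pq then M h.choose else 0
  map_add' M N := by
    funext pq
    by_cases h : PivCond X pq <;> simp [h] <;> erw [Pi.add_apply] <;> simp [h]
  map_smul' c M := by
    funext pq
    by_cases h : PivCond X pq <;> simp [h] <;> erw [Pi.smul_apply] <;> simp [h]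

/-- If a shift-invariant Markov cocycle vanishes on all chosen single-site pivots at the
origin and `X` has the pivot property, then it vanishes identically. -/
lemma cocycle_vanish {d : ℕ} {A : Type*} (X : Set (Site d → A))
    (hshift : ∀ n : Site d, shift n '' X = X)
    (hpivot : ∀ x ∈ X, ∀ y ∈ X, {n | x n ≠ y n}.Finite →
      ∃ (k : ℕ) (c : ℕ → Site d → A),
        c 0 = x ∧ c k = y ∧ (∀ i ≤ k, c i ∈ X) ∧
        ∀ i < k, ∃! v : Site d, c i v ≠ c (i + 1) v)
    (M : ↥(DeltaOf X) → ℝ) (hC : IsCocycle X M) (hMk : IsMarkovProp X M)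
    (hS : IsShiftInvCocycle X M) (h0 : Phi X M = 0) : M = 0 := by
  have refl0 : ∀ (x : Site d → A) (h : (x, x) ∈ DeltaOf X), M ⟨(x, x), h⟩ = 0 := by
    intro x h
    have := hC x x x h h h
    linarith
  have pivot0 : ∀ (x y : Site d → A) (h : (x, y) ∈ DeltaOf X),
      (∀ n : Site d, n ≠ 0 → x n = y n) → M ⟨(x, y), h⟩ = 0 := by
    intro x y h hag
    have hpB : (fun m : ↥(SiteW d) => x m.val) ∈ PattB X := ⟨x, h.1, fun m => rfl⟩
    have hqB : (fun m : ↥(SiteW d) => y m.val) ∈ PattB X := ⟨y, h.2.1, fun m => rfl⟩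
    have hcond : PivCond X (⟨_, hpB⟩, ⟨_, hqB⟩) :=
      ⟨⟨(x, y), h⟩, hag, fun m => rfl, fun m => rfl⟩
    have hval : M hcond.choose = 0 := by
      have hz := congrFun h0 (⟨_, hpB⟩, ⟨_, hqB⟩)
      simp only [Phi, LinearMap.coe_mk, AddHom.coe_mk, Pi.zero_apply] at hz
      rwa [dif_pos hcond] at hz
    obtain ⟨hz1, hz2, hz3⟩ := hcond.choose_spec
    have hmar := hMk x y hcond.choose.1.1 hcond.choose.1.2 h hcond.choose.2 {0}
      (Set.finite_singleton 0)
      (fun n hn => hag n (by simpa using hn))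
      (fun n hn => hz1 n (by simpa using hn))
      (fun n hn => hz2 ⟨n, hn⟩)
      (fun n hn => hz3 ⟨n, hn⟩)
    rw [hmar]
    exact hval
  have pivotv : ∀ (v : Site d) (x y : Site d → A) (h : (x, y) ∈ DeltaOf X),
      (∀ n : Site d, n ≠ v → x n = y n) → M ⟨(x, y), h⟩ = 0 := by
    intro v x y h hag
    have hx' : shift v x ∈ X := by rw [← hshift v]; exact ⟨x, h.1, rfl⟩
    have hy' : shift v y ∈ X := by rw [← hshift v]; exact ⟨y, h.2.1, rfl⟩
    have hag' : ∀ m : Site d, m ≠ 0 → shift v x m = shift v y m := by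
      intro m hm
      exact hag (m + v) (fun hc => hm (by simpa using hc))
    have hfin : {m | shift v x m ≠ shift v y m}.Finite := by
      refine (Set.finite_singleton (0 : Site d)).subset ?_
      intro m hm
      by_contra hm0
      exact hm (hag' m (by simpa using hm0))
    have hs : (shift v x, shift v y) ∈ DeltaOf X := ⟨hx', hy', hfin⟩
    rw [← hS v x y h hs]
    exact pivot0 _ _ hs hag'
  funext z
  obtain ⟨⟨x, y⟩, h⟩ := z
  show M ⟨(x, y), h⟩ = 0
  obtain ⟨k, c, hc0, hck, hcX, hcpiv⟩ := hpivot x h.1 y h.2.1 h.2.2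
  subst hc0
  subst hck
  have key : ∀ j, j ≤ k → ∃ (hj : (c 0, c j) ∈ DeltaOf X), M ⟨(c 0, c j), hj⟩ = 0 := by
    intro j
    induction j with
    | zero =>
      intro _
      exact ⟨⟨h.1, h.1, by simp⟩, refl0 _ _⟩
    | succ j ih =>
      intro hjk
      obtain ⟨hj, hMj⟩ := ih (Nat.le_of_succ_le hjk)
      obtain ⟨v, hv, hvu⟩ := hcpiv j hjk
      have hagree : ∀ n : Site d, n ≠ v → c j n = c (j + 1) n := by
        intro n hn
        by_contra hne
        exact hn (hvu n hne)
      have hstep : (c j, c (j + 1)) ∈ DeltaOf X := by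
        refine ⟨hcX j (Nat.le_of_succ_le hjk), hcX (j + 1) hjk, ?_⟩
        refine (Set.finite_singleton v).subset ?_
        intro n hn
        by_contra hn0
        exact hn (hagree n (by simpa using hn0))
      have hMstep : M ⟨(c j, c (j + 1)), hstep⟩ = 0 := pivotv v _ _ hstep hagree
      have hj1 : (c 0, c (j + 1)) ∈ DeltaOf X := by
        refine ⟨h.1, hcX (j + 1) hjk, ?_⟩
        refine (hj.2.2.union hstep.2.2).subset ?_
        intro n hn
        by_contra hcon
        simp only [Set.mem_union, Set.mem_setOf_eq, not_or, not_not] at hcon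
        exact hn (hcon.1.trans hcon.2)
      refine ⟨hj1, ?_⟩
      rw [hC (c 0) (c j) (c (j + 1)) hj hstep hj1, hMj, hMstep]
      ring
  obtain ⟨hk', hMk'⟩ := key k le_rfl
  exact hMk'
/-- The space of shift-invariant Markov cocycles on `X`, as a submodule. -/
def CocycleSubmodule {d : ℕ} {A : Type*} (X : Set (Site d → A)) :
    Submodule ℝ (↥(DeltaOf X) → ℝ) where
  carrier := {M | IsCocycle X M ∧ IsMarkovProp X M ∧ IsShiftInvCocycle X M}
  add_mem' := by
    rintro M N ⟨hc, hm, hs⟩ ⟨hc', hm', hs'⟩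
    refine ⟨?_, ?_, ?_⟩
    · intro x y z hxy hyz hxz
      simp only [Pi.add_apply, hc x y z hxy hyz hxz, hc' x y z hxy hyz hxz]
      ring
    · intro x y x' y' hxy hxy' F hF h1 h2 h3 h4
      simp only [Pi.add_apply, hm x y x' y' hxy hxy' F hF h1 h2 h3 h4,
        hm' x y x' y' hxy hxy' F hF h1 h2 h3 h4]
    · intro n x y hxy hsh
      simp only [Pi.add_apply, hs n x y hxy hsh, hs' n x y hxy hsh]
  zero_mem' :=
    ⟨fun x y z hxy hyz hxz => by simp, fun x y x' y' _ _ _ _ _ _ _ _ => rfl,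
      fun n x y _ _ => rfl⟩
  smul_mem' := by
    rintro c M ⟨hc, hm, hs⟩
    refine ⟨?_, ?_, ?_⟩
    · intro x y z hxy hyz hxz
      simp only [Pi.smul_apply, smul_eq_mul, hc x y z hxy hyz hxz]
      ring
    · intro x y x' y' hxy hxy' F hF h1 h2 h3 h4
      simp only [Pi.smul_apply, smul_eq_mul, hm x y x' y' hxy hxy' F hF h1 h2 h3 h4]
    · intro n x y hxy hsh
      simp only [Pi.smul_apply, smul_eq_mul, hs n x y hxy hsh]

/-- For a shift-invariant topological Markov field `X ⊆ A^{ℤ^d}` with the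
pivot property, the space of shift-invariant Markov cocycles on `X` is a finite-dimensional
vector space of dimension at most `|B_{{0}∪∂{0}}(X)|²`. -/
theorem pivot_property_inv_markov_cocycles_finite_dimensional
    {A : Type*} [Fintype A] [TopologicalSpace A] [DiscreteTopology A]
    (d : ℕ) (X : Set (Site d → A))
    (hcompact : IsCompact X)
    (hTMF : ∀ F : Set (Site d), F.Finite → ∀ x ∈ X, ∀ y ∈ X,
      (∀ n ∈ siteBdry F, x n = y n) →
      ∀ z : Site d → A, (∀ n ∈ F, z n = x n) → (∀ n ∉ F, z n = y n) → z ∈ X)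
    (hshift : ∀ n : Site d, shift n '' X = X)
    (hpivot : ∀ x ∈ X, ∀ y ∈ X, {n | x n ≠ y n}.Finite →
      ∃ (k : ℕ) (c : ℕ → Site d → A),
        c 0 = x ∧ c k = y ∧ (∀ i ≤ k, c i ∈ X) ∧
        ∀ i < k, ∃! v : Site d, c i v ≠ c (i + 1) v) :
    ∃ P : Submodule ℝ (↥(DeltaOf X) → ℝ),
      (P : Set (↥(DeltaOf X) → ℝ)) =
        {M | IsCocycle X M ∧ IsMarkovProp X M ∧ IsShiftInvCocycle X M} ∧
      FiniteDimensional ℝ ↥P ∧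
      Module.finrank ℝ ↥P ≤
        ({f : ↥({(0 : Site d)} ∪ siteBdry {(0 : Site d)}) → A |
          ∃ x ∈ X, ∀ m : ↥({(0 : Site d)} ∪ siteBdry {(0 : Site d)}), f m = x m.val}).ncard ^ 2 := by
  classical
  haveI hfinW : Finite ↥(SiteW d) := (siteW_finite d).to_subtype
  haveI : Fintype ↥(PattB X) := (Set.toFinite (PattB X)).fintype
  set Φ := (Phi X).comp (CocycleSubmodule X).subtype with hΦdef
  have hinj : Function.Injective Φ := by
    rw [← LinearMap.ker_eq_bot]
    apply LinearMap.ker_eq_bot'.mpr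
    intro M hM0
    obtain ⟨hc, hm, hs⟩ := M.2
    exact Subtype.ext (cocycle_vanish X hshift hpivot M.1 hc hm hs hM0)
  haveI hFD : FiniteDimensional ℝ ↥(CocycleSubmodule X) :=
    FiniteDimensional.of_injective Φ hinj
  refine ⟨CocycleSubmodule X, rfl, hFD, ?_⟩
  have hle := LinearMap.finrank_le_finrank_of_injective hinj
  have hcard : Module.finrank ℝ ((↥(PattB X) × ↥(PattB X)) → ℝ)
      = (PattB X).ncard ^ 2 := by
    rw [Module.finrank_fintype_fun_eq_card, Fintype.card_prod,
      ← Nat.card_coe_set_eq, Nat.card_eq_fintype_card, sq]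
  show Module.finrank ℝ ↥(CocycleSubmodule X) ≤ (PattB X).ncard ^ 2
  rw [← hcard]
  exact hle
end

section
/- Fix d ≥ 2 and an integer r ≥ 2 with r ≠ 4. A configuration x ∈ (ℤ/rℤ)^{ℤ^d} satisfies x_n − x_m = ±1 (mod r) for all n,m ∈ ℤ^d with ‖n−m‖₁ = 1 if and only if there exists a height function x̂ : ℤ^d → ℤ with x̂_n ≡ x_n (mod r) for every n ∈ ℤ^d. Consequently X_r := φ_r(Ht) = { x ∈ (ℤ/rℤ)^{ℤ^d} : x_n − x_m = ±1 (mod r) whenever ‖n−m‖₁ = 1 }. -/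
open scoped BigOperators

/-- The nearest neighbor shift of finite type `X_r`. -/
def Xr (d r : ℕ) : Set (Site d → ZMod r) :=
  {x | ∀ n m : Site d, adjacent n m → x n - x m = 1 ∨ x n - x m = -1}

/-- A height function on `ℤ^d`. -/
def IsHeightFn {d : ℕ} (h : Site d → ℤ) : Prop :=
  ∀ n m : Site d, adjacent n m → |h n - h m| = 1

namespace HFaux

def esite (d : ℕ) (i : Fin d) : Site d := fun j => if j = i then 1 else 0

lemma adj_step {d : ℕ} (i : Fin d) (p : Site d) : adjacent (p + esite d i) p := by
  unfold adjacent esite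
  have : ∀ j : Fin d, |(p + fun j => if j = i then (1:ℤ) else 0) j - p j|
      = if j = i then 1 else 0 := by
    intro j
    by_cases hj : j = i <;> simp [hj]
  rw [Finset.sum_congr rfl fun j _ => this j]
  simp

lemma adj_cases {d : ℕ} {n m : Site d} (h : adjacent n m) :
    ∃ j : Fin d, n = m + esite d j ∨ m = n + esite d j := by
  unfold adjacent at h
  have hnn : ∀ i : Fin d, 0 ≤ |n i - m i| := fun i => abs_nonneg _
  have hex : ∃ j : Fin d, 1 ≤ |n j - m j| := by
    by_contra hc
    push_neg at hc
    have : (∑ i, |n i - m i|) = 0 :=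
      Finset.sum_eq_zero fun i _ => by have := hc i; have := hnn i; omega
    omega
  obtain ⟨j, hj⟩ := hex
  have hsplit : |n j - m j| + ∑ i ∈ Finset.univ.erase j, |n i - m i| = 1 :=
    (Finset.add_sum_erase _ _ (Finset.mem_univ j)).trans h
  have hrest0 : ∑ i ∈ Finset.univ.erase j, |n i - m i| = 0 := by
    have := Finset.sum_nonneg (fun i (_ : i ∈ Finset.univ.erase j) => hnn i)
    linarith
  have hothers : ∀ i : Fin d, i ≠ j → n i = m i := by
    intro i hij
    have := (Finset.sum_eq_zero_iff_of_nonneg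
      (fun i (_ : i ∈ Finset.univ.erase j) => hnn i)).mp hrest0 i
      (Finset.mem_erase.mpr ⟨hij, Finset.mem_univ i⟩)
    have := abs_eq_zero.mp this
    omega
  have habs : |n j - m j| = 1 := by linarith
  rcases abs_eq (by norm_num : (0:ℤ) ≤ 1) |>.mp habs with h1 | h1
  · refine ⟨j, Or.inl ?_⟩
    funext i
    by_cases hij : i = j
    · subst hij; simp [esite]; omega
    · simp [esite, hij, hothers i hij]
  · refine ⟨j, Or.inr ?_⟩
    funext i
    by_cases hij : i = j
    · subst hij; simp [esite]; omega
    · simp [esite, hij, (hothers i hij).symm]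


variable {d r : ℕ}

def sg (x : Site d → ZMod r) (i : Fin d) (p : Site d) : ℤ :=
  if x (p + esite d i) - x p = 1 then 1 else -1

lemma sg_mem (x : Site d → ZMod r) (i : Fin d) (p : Site d) :
    sg x i p = 1 ∨ sg x i p = -1 := by
  unfold sg; split <;> simp

lemma sg_cast {x : Site d → ZMod r} (hx : x ∈ Xr d r) (i : Fin d) (p : Site d) :
    ((sg x i p : ℤ) : ZMod r) = x (p + esite d i) - x p := by
  by_cases hc : x (p + esite d i) - x p = 1
  · simp [sg, hc]
  · rcases hx _ _ (adj_step i p) with h | h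
    · exact absurd h hc
    · unfold sg
      rw [if_neg hc]
      push_cast
      exact h.symm

lemma int_key (hr : 3 ≤ r) (hr4 : r ≠ 4) (v : ℤ)
    (h0 : (v : ZMod r) = 0)
    (hmem : v = -4 ∨ v = -2 ∨ v = 0 ∨ v = 2 ∨ v = 4) : v = 0 := by
  rw [ZMod.intCast_zmod_eq_zero_iff_dvd] at h0
  have h2 : ¬ ((r:ℤ) ∣ 2) := by
    intro hdvd
    have := Int.le_of_dvd (by norm_num) hdvd
    omega
  have h4 : ¬ ((r:ℤ) ∣ 4) := by
    intro hdvd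
    have hle : (r:ℤ) ≤ 4 := Int.le_of_dvd (by norm_num) hdvd
    have hr' : r = 3 := by omega
    subst hr'
    norm_num at hdvd
  rcases hmem with h|h|h|h|h <;> subst h
  · exact absurd (dvd_neg.mp h0) h4
  · exact absurd (dvd_neg.mp h0) h2
  · rfl
  · exact absurd h0 h2
  · exact absurd h0 h4

lemma plaquette {x : Site d → ZMod r} (hx : x ∈ Xr d r) (hr : 2 ≤ r) (hr4 : r ≠ 4)
    (i j : Fin d) (p : Site d) :
    sg x i (p + esite d j) - sg x i p = sg x j (p + esite d i) - sg x j p := by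
  rcases eq_or_lt_of_le hr with hr2 | hr3
  · -- r = 2
    have hone : ∀ (k : Fin d) (q : Site d), sg x k q = 1 := by
      intro k q
      unfold sg
      rw [if_pos]
      rcases hx _ _ (adj_step k q) with h | h
      · exact h
      · rw [h]
        subst hr2
        decide
    simp [hone]
  · -- 3 ≤ r
    have hcomm : p + esite d j + esite d i = p + esite d i + esite d j := by
      rw [add_right_comm]
    have hcast : (((sg x i (p + esite d j) - sg x i p - sg x j (p + esite d i)
        + sg x j p : ℤ)) : ZMod r) = 0 := by
      push_cast [sg_cast hx]
      rw [hcomm]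
      ring
    have m1 := sg_mem x i (p + esite d j)
    have m2 := sg_mem x i p
    have m3 := sg_mem x j (p + esite d i)
    have m4 := sg_mem x j p
    have hv := int_key hr3 hr4 _ hcast (by omega)
    omega

def w (x : Site d → ZMod r) (i : Fin d) (p : Site d) (k : ℤ) : ℤ :=
  (∑ t ∈ Finset.range k.toNat, sg x i (p + (t : ℤ) • esite d i))
    - ∑ t ∈ Finset.range (-k).toNat, sg x i (p + (-(t : ℤ) - 1) • esite d i)

lemma step_smul (i : Fin d) (p : Site d) (k : ℤ) :
    p + k • esite d i + esite d i = p + (k + 1) • esite d i := by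
  funext t
  simp only [esite, Pi.add_apply, Pi.smul_apply, smul_eq_mul]
  split <;> ring

lemma w_zero (x : Site d → ZMod r) (i : Fin d) (p : Site d) : w x i p 0 = 0 := by
  simp [w]

lemma w_succ (x : Site d → ZMod r) (i : Fin d) (p : Site d) (k : ℤ) :
    w x i p (k + 1) = w x i p k + sg x i (p + k • esite d i) := by
  unfold w
  rcases le_or_gt 0 k with hk | hk
  · have h1 : (k + 1).toNat = k.toNat + 1 := by omega
    have h2 : (-(k+1)).toNat = 0 := by omega
    have h3 : (-k).toNat = 0 := by omega
    rw [h1, h2, h3, Finset.sum_range_succ, Finset.sum_range_zero]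
    have h4 : ((k.toNat : ℕ) : ℤ) = k := by omega
    rw [h4]
    ring
  · have h1 : (k + 1).toNat = 0 := by omega
    have h2 : k.toNat = 0 := by omega
    have h3 : (-k).toNat = (-(k+1)).toNat + 1 := by omega
    rw [h1, h2, h3, Finset.sum_range_succ, Finset.sum_range_zero]
    have h4 : (-((((-(k+1)).toNat : ℕ) : ℤ)) - 1) = k := by omega
    rw [h4]
    ring

lemma w_succ' (x : Site d → ZMod r) (i : Fin d) (p : Site d) (k : ℤ) :
    w x i p k = w x i p (k - 1) + sg x i (p + (k - 1) • esite d i) := by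
  have := w_succ x i p (k - 1)
  rw [sub_add_cancel] at this
  exact this

lemma w_cast {x : Site d → ZMod r} (hx : x ∈ Xr d r) (i : Fin d) (p : Site d) (k : ℤ) :
    ((w x i p k : ℤ) : ZMod r) = x (p + k • esite d i) - x p := by
  induction k using Int.induction_on with
  | zero => simp [w_zero]
  | succ k ih =>
      rw [w_succ]
      push_cast
      rw [ih, sg_cast hx, step_smul]
      ring
  | pred k ih =>
      have hs := w_succ x i p (-(k : ℤ) - 1)
      rw [show (-(k : ℤ) - 1) + 1 = -(k:ℤ) by ring] at hs
      have hw : (w x i p (-(k:ℤ) - 1) : ZMod r)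
          = (w x i p (-(k:ℤ)) : ZMod r) - ((sg x i (p + (-(k:ℤ)-1) • esite d i) : ℤ) : ZMod r) := by
        rw [hs]; push_cast; ring
      rw [hw, ih, sg_cast hx, step_smul,
        show (-(k:ℤ) - 1 + 1) = -(k:ℤ) by ring]
      ring

lemma w_shift {x : Site d → ZMod r} (hx : x ∈ Xr d r) (hr : 2 ≤ r) (hr4 : r ≠ 4)
    (i j : Fin d) (p : Site d) (k : ℤ) :
    w x i (p + esite d j) k - w x i p k = sg x j (p + k • esite d i) - sg x j p := by
  induction k using Int.induction_on with
  | zero => simp [w_zero]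
  | succ k ih =>
      rw [w_succ, w_succ]
      have hq := plaquette hx hr hr4 i j (p + (k:ℤ) • esite d i)
      have h1 : p + (k:ℤ) • esite d i + esite d j = p + esite d j + (k:ℤ) • esite d i := by
        rw [add_right_comm]
      rw [h1, step_smul] at hq
      omega
  | pred k ih =>
      have hs1 := w_succ x i p (-(k:ℤ) - 1)
      have hs2 := w_succ x i (p + esite d j) (-(k:ℤ) - 1)
      rw [show (-(k : ℤ) - 1) + 1 = -(k:ℤ) by ring] at hs1 hs2
      have hq := plaquette hx hr hr4 i j (p + (-(k:ℤ)-1) • esite d i)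
      have h1 : p + (-(k:ℤ)-1) • esite d i + esite d j
          = p + esite d j + (-(k:ℤ)-1) • esite d i := by
        rw [add_right_comm]
      rw [h1, step_smul, show (-(k:ℤ) - 1 + 1) = -(k:ℤ) by ring] at hq
      omega

def trunc {d : ℕ} (n : Site d) (i : ℕ) : Site d := fun j => if (j : ℕ) < i then n j else 0

lemma trunc_zero {d : ℕ} (n : Site d) : trunc n 0 = 0 := by
  funext j; simp [trunc]

lemma trunc_top {d : ℕ} (n : Site d) : trunc n d = n := by
  funext j; simp [trunc, j.isLt]

lemma trunc_succ {d : ℕ} (n : Site d) (i : Fin d) :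
    trunc n (i : ℕ) + (n i) • esite d i = trunc n ((i : ℕ) + 1) := by
  funext j
  simp only [trunc, esite, Pi.add_apply, Pi.smul_apply, smul_eq_mul]
  by_cases hj : j = i
  · subst hj; simp
  · have hne : (j : ℕ) ≠ (i : ℕ) := fun hc => hj (Fin.ext hc)
    rw [if_neg hj]
    rcases lt_or_ge (j : ℕ) (i : ℕ) with h | h
    · rw [if_pos h, if_pos (by omega)]; ring
    · rw [if_neg (by omega), if_neg (by omega)]; ring

def h0 (x : Site d → ZMod r) (n : Site d) : ℤ :=
  ∑ i : Fin d, w x i (trunc n (i : ℕ)) (n i)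

lemma h0_cast {x : Site d → ZMod r} (hx : x ∈ Xr d r) (n : Site d) :
    ((h0 x n : ℤ) : ZMod r) = x n - x 0 := by
  unfold h0
  push_cast
  have h1 : ∀ i : Fin d, ((w x i (trunc n (i : ℕ)) (n i) : ℤ) : ZMod r)
      = (fun m => x (trunc n m)) ((i : ℕ) + 1) - (fun m => x (trunc n m)) (i : ℕ) := by
    intro i
    rw [w_cast hx, trunc_succ]
  rw [Finset.sum_congr rfl fun i _ => h1 i,
    Fin.sum_univ_eq_sum_range (fun m => (fun m => x (trunc n m)) (m + 1)
      - (fun m => x (trunc n m)) m) d,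
    Finset.sum_range_sub (fun m => x (trunc n m)) d]
  simp only [trunc_top, trunc_zero]

lemma h0_step {x : Site d → ZMod r} (hx : x ∈ Xr d r) (hr : 2 ≤ r) (hr4 : r ≠ 4)
    (n : Site d) (j : Fin d) :
    h0 x (n + esite d j) - h0 x n = sg x j n := by
  set n' := n + esite d j with hn'
  set g : ℕ → ℤ := fun m => if m ≤ (j : ℕ) then 0 else sg x j (trunc n m) with hg
  have htrunc_le : ∀ i : Fin d, (i : ℕ) ≤ (j : ℕ) → trunc n' (i : ℕ) = trunc n (i : ℕ) := by
    intro i hij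
    funext t
    simp only [trunc, hn', Pi.add_apply, esite]
    by_cases ht : (t : ℕ) < (i : ℕ)
    · rw [if_pos ht, if_pos ht, if_neg (fun hc => by subst hc; omega), add_zero]
    · rw [if_neg ht, if_neg ht]
  have htrunc_gt : ∀ i : Fin d, (j : ℕ) < (i : ℕ) →
      trunc n' (i : ℕ) = trunc n (i : ℕ) + esite d j := by
    intro i hij
    funext t
    simp only [trunc, hn', Pi.add_apply, esite]
    by_cases ht : t = j
    · subst ht
      simp [hij]
    · simp [ht]
  have hT : ∀ i : Fin d,
      w x i (trunc n' (i : ℕ)) (n' i) - w x i (trunc n (i : ℕ)) (n i)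
        = g ((i : ℕ) + 1) - g (i : ℕ) := by
    intro i
    rcases lt_trichotomy (i : ℕ) (j : ℕ) with hlt | heq | hgt
    · have hni : n' i = n i := by
        simp only [hn', Pi.add_apply, esite]
        rw [if_neg (fun hc : i = j => by subst hc; omega), add_zero]
      rw [htrunc_le i (le_of_lt hlt), hni, hg]
      simp only [if_pos (le_of_lt hlt), if_pos (by omega : (i:ℕ)+1 ≤ (j:ℕ))]
      ring
    · have hij : i = j := Fin.ext heq
      subst hij
      have hni : n' i = n i + 1 := by
        simp [hn', esite]
      rw [htrunc_le i le_rfl, hni, w_succ, hg]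
      simp only [if_pos le_rfl, if_neg (by omega : ¬ ((i:ℕ)+1 ≤ (i:ℕ)))]
      rw [trunc_succ]
      ring
    · have hni : n' i = n i := by
        simp only [hn', Pi.add_apply, esite]
        rw [if_neg (fun hc : i = j => by subst hc; omega), add_zero]
      rw [htrunc_gt i hgt, hni, hg]
      simp only [if_neg (by omega : ¬ ((i:ℕ) ≤ (j:ℕ))),
        if_neg (by omega : ¬ ((i:ℕ)+1 ≤ (j:ℕ)))]
      have := w_shift hx hr hr4 i j (trunc n (i : ℕ)) (n i)
      rw [trunc_succ] at this
      omega
  unfold h0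
  rw [← Finset.sum_sub_distrib]
  rw [Finset.sum_congr rfl fun i _ => hT i,
    Fin.sum_univ_eq_sum_range (fun m => g (m + 1) - g m) d,
    Finset.sum_range_sub g d, hg]
  simp only [if_neg (by omega : ¬ (d ≤ (j : ℕ))), if_pos (by omega : 0 ≤ (j : ℕ)),
    trunc_top, sub_zero]

end HFaux

/-- For `d ≥ 2` and `r ≥ 2`, `r ≠ 4`: a configuration
`x ∈ (ℤ/rℤ)^{ℤ^d}` satisfies `x_n - x_m = ±1 (mod r)` for adjacent sites iff it is the
mod-`r` reduction of a height function; consequently `X_r = φ_r(Ht)`. -/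
theorem Xr_eq_image_of_height_functions
    (d r : ℕ) (hd : 2 ≤ d) (hr : 2 ≤ r) (hr4 : r ≠ 4) :
    (∀ x : Site d → ZMod r,
      x ∈ Xr d r ↔ ∃ h : Site d → ℤ, IsHeightFn h ∧ ∀ n : Site d, ((h n : ZMod r)) = x n) ∧
    ((fun (h : Site d → ℤ) => (fun n : Site d => ((h n : ZMod r)))) ''
        {h : Site d → ℤ | IsHeightFn h}) = Xr d r := by
  haveI : NeZero r := ⟨by omega⟩
  have main : ∀ x : Site d → ZMod r,
      x ∈ Xr d r ↔ ∃ h : Site d → ℤ, IsHeightFn h ∧ ∀ n : Site d, ((h n : ZMod r)) = x n := by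
    intro x
    constructor
    · intro hx
      refine ⟨fun n => HFaux.h0 x n + ((x 0).val : ℤ), ?_, ?_⟩
      · intro n m hadj
        obtain ⟨j, hj | hj⟩ := HFaux.adj_cases hadj
        · subst hj
          have hstep := HFaux.h0_step hx hr hr4 m j
          have heq : (HFaux.h0 x (m + HFaux.esite d j) + ((x 0).val : ℤ))
              - (HFaux.h0 x m + ((x 0).val : ℤ)) = HFaux.sg x j m := by omega
          rw [heq]
          rcases HFaux.sg_mem x j m with h | h <;> rw [h] <;> norm_num
        · subst hj
          have hstep := HFaux.h0_step hx hr hr4 n j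
          have heq : (HFaux.h0 x n + ((x 0).val : ℤ))
              - (HFaux.h0 x (n + HFaux.esite d j) + ((x 0).val : ℤ)) = -(HFaux.sg x j n) := by
            omega
          rw [heq]
          rcases HFaux.sg_mem x j n with h | h <;> rw [h] <;> norm_num
      · intro n
        push_cast
        rw [HFaux.h0_cast hx, ZMod.natCast_val, ZMod.cast_id]
        ring
    · rintro ⟨h, hh, hc⟩ n m hadj
      have h1 := hh n m hadj
      have h2 : x n - x m = ((h n - h m : ℤ) : ZMod r) := by
        rw [← hc n, ← hc m]
        push_cast
        ring
      rcases (abs_eq (by norm_num : (0:ℤ) ≤ 1)).mp h1 with h3 | h3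
      · left
        rw [h2, h3]
        push_cast
        ring
      · right
        rw [h2, h3]
        push_cast
        ring
  refine ⟨main, ?_⟩
  ext x
  simp only [Set.mem_image, Set.mem_setOf_eq]
  rw [main x]
  constructor
  · rintro ⟨h, hh, heq⟩
    exact ⟨h, hh, fun n => congrFun heq n⟩
  · rintro ⟨h, hh, hc⟩
    exact ⟨h, hh, funext hc⟩
end

section
/- Fix d ≥ 2 and an integer r with r ∉ {1,2,4}. If x̂ and ŷ are height functions on ℤ^d with x̂_n ≡ ŷ_n (mod r) for all n ∈ ℤ^d, then there exists M ∈ ℤ such that x̂_n − ŷ_n = rM for all n ∈ ℤ^d. -/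
open scoped BigOperators

/-- A function constant along edges is globally constant. -/
lemma const_of_adj {d : ℕ} (f : Site d → ℤ)
    (hf : ∀ n m : Site d, adjacent n m → f n = f m) (n : Site d) : f n = f 0 := by
  generalize hk : (∑ i, (n i).natAbs) = k
  induction k using Nat.strong_induction_on generalizing n with
  | _ k ih =>
    by_cases h0 : n = 0
    · subst h0; rfl
    · obtain ⟨i, hi⟩ : ∃ i, n i ≠ 0 := by
        by_contra h; push_neg at h; exact h0 (funext h)
      have hsgn : Int.sign (n i) = 1 ∨ Int.sign (n i) = -1 := by
        rcases hi.lt_or_gt with h | h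
        · right; exact Int.sign_eq_neg_one_iff_neg.mpr h
        · left; exact Int.sign_eq_one_iff_pos.mpr h
      set m : Site d := Function.update n i (n i - Int.sign (n i)) with hm
      have hadj : adjacent n m := by
        unfold adjacent
        rw [Finset.sum_eq_single i]
        · simp only [hm, Function.update_self]
          rcases hsgn with h | h <;> simp [h]
        · intro b _ hb
          simp [hm, Function.update_of_ne hb]
        · intro h; exact absurd (Finset.mem_univ i) h
      have hmi : (m i).natAbs + 1 = (n i).natAbs := by
        simp only [hm, Function.update_self]
        rcases hi.lt_or_gt with h | h
        · rw [Int.sign_eq_neg_one_iff_neg.mpr h]; omega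
        · rw [Int.sign_eq_one_iff_pos.mpr h]; omega
      have hsum : (∑ j, (m j).natAbs) < k := by
        have h1 : ∑ j, (m j).natAbs =
            ∑ j ∈ Finset.univ.erase i, (m j).natAbs + (m i).natAbs :=
          (Finset.sum_erase_add _ _ (Finset.mem_univ i)).symm
        have h2 : ∑ j, (n j).natAbs =
            ∑ j ∈ Finset.univ.erase i, (n j).natAbs + (n i).natAbs :=
          (Finset.sum_erase_add _ _ (Finset.mem_univ i)).symm
        have h3 : ∑ j ∈ Finset.univ.erase i, (m j).natAbs =
            ∑ j ∈ Finset.univ.erase i, (n j).natAbs := by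
          refine Finset.sum_congr rfl fun j hj => ?_
          rw [hm, Function.update_of_ne (Finset.ne_of_mem_erase hj)]
        omega
      rw [hf n m hadj]
      exact ih _ hsum m rfl

/-- For `d ≥ 2` and a positive integer `r ∉ {1,2,4}`: two height
functions on `ℤ^d` which are congruent mod `r` at every site differ by a constant
integer multiple of `r`. -/
theorem height_lifts_differ_by_constant_multiple
    (d r : ℕ) (hd : 2 ≤ d) (hr0 : 0 < r) (hr1 : r ≠ 1) (hr2 : r ≠ 2) (hr4 : r ≠ 4)
    (x y : Site d → ℤ) (hx : IsHeightFn x) (hy : IsHeightFn y)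
    (hcong : ∀ n : Site d, ((x n : ZMod r)) = ((y n : ZMod r))) :
    ∃ M : ℤ, ∀ n : Site d, x n - y n = r * M := by
  have hr3 : (3 : ℤ) ≤ (r : ℤ) := by exact_mod_cast (by omega : 3 ≤ r)
  have hdvd : ∀ n : Site d, (r : ℤ) ∣ x n - y n := by
    intro n
    have := (ZMod.intCast_eq_intCast_iff' (x n) (y n) r).mp (hcong n)
    exact Int.ModEq.dvd this.symm
  have hedge : ∀ n m : Site d, adjacent n m → x n - y n = x m - y m := by
    intro n m h
    have hx1 := hx n m h
    have hy1 := hy n m h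
    have hdx : x n - x m = 1 ∨ x n - x m = -1 := abs_eq (by norm_num) |>.mp hx1
    have hdy : y n - y m = 1 ∨ y n - y m = -1 := abs_eq (by norm_num) |>.mp hy1
    have ht : (r : ℤ) ∣ (x n - y n) - (x m - y m) := dvd_sub (hdvd n) (hdvd m)
    have habs : |(x n - y n) - (x m - y m)| < (r : ℤ) := by
      rcases hdx with h1 | h1 <;> rcases hdy with h2 | h2 <;>
        rw [abs_lt] <;> constructor <;> omega
    have := Int.eq_zero_of_abs_lt_dvd ht habs
    omega
  obtain ⟨M, hM⟩ := hdvd 0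
  refine ⟨M, fun n => ?_⟩
  have := const_of_adj (fun n => x n - y n) hedge n
  simpa [hM] using this
end

section
/- Fix d ≥ 2 and an integer r with r ∉ {1,2,4}, and let X_r ⊆ (ℤ/rℤ)^{ℤ^d} be the set of configurations x with x_n − x_m = ±1 (mod r) whenever ‖n−m‖₁ = 1. Then: (1) if x,y ∈ X_r agree outside a finite set, there exist height functions x̂, ŷ with x̂ ≡ x, ŷ ≡ y (mod r) pointwise and x̂_n = ŷ_n for all but finitely many n; (2) for any two height functions x̂, ŷ which agree at all but finitely many sites, x̂_n − ŷ_n is even for every n ∈ ℤ^d; (3) if x,y ∈ X_r satisfy x_n = y_n for all n ≠ n₀ and x_{n₀} ≠ y_{n₀}, then there exist height functions x̂, ŷ with x̂ ≡ x, ŷ ≡ y (mod r) pointwise, |x̂_{n₀} − ŷ_{n₀}| = 2, and x̂_n = ŷ_n for all n ≠ n₀. -/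
open scoped BigOperators

/-- `h` is a height-function lift of the configuration `x ∈ (ℤ/rℤ)^{ℤ^d}`. -/
def LiftsTo {d r : ℕ} (h : Site d → ℤ) (x : Site d → ZMod r) : Prop :=
  IsHeightFn h ∧ ∀ n : Site d, ((h n : ZMod r)) = x n

namespace HCA

variable {d : ℕ}

/-- standard basis vector -/
def e (i : Fin d) : Site d := fun j => if j = i then 1 else 0

lemma update_add_e (b : Site d) (i : Fin d) (t : ℤ) :
    Function.update b i t + e i = Function.update b i (t + 1) := by
  funext j
  by_cases h : j = i <;> simp [Function.update_apply, e, h, Pi.add_apply]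

lemma add_e_apply (b : Site d) (i j : Fin d) : (b + e i) j = b j + if j = i then 1 else 0 := by
  simp [e, Pi.add_apply]

lemma adj_step (b : Site d) (i : Fin d) : adjacent b (b + e i) := by
  unfold adjacent
  have : ∀ j, |b j - (b + e i) j| = if j = i then 1 else 0 := by
    intro j
    by_cases h : j = i <;> simp [add_e_apply, e, h]
  rw [Finset.sum_congr rfl fun j _ => this j]
  simp

lemma adjacent_symm {n m : Site d} (h : adjacent n m) : adjacent m n := by
  unfold adjacent at h ⊢
  rw [Finset.sum_congr rfl fun j _ => abs_sub_comm (m j) (n j)]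
  exact h

lemma adj_step' (b : Site d) (i : Fin d) : adjacent (b + e i) b :=
  adjacent_symm (adj_step b i)

lemma adj_cases {n m : Site d} (h : adjacent n m) :
    ∃ i : Fin d, (m = n + e i ∨ n = m + e i) ∧ ∀ j, j ≠ i → n j = m j := by
  unfold adjacent at h
  have hnn : ∀ j : Fin d, 0 ≤ |n j - m j| := fun j => abs_nonneg _
  have hex : ∃ i : Fin d, |n i - m i| ≠ 0 := by
    by_contra hc
    push_neg at hc
    rw [Finset.sum_congr rfl fun j _ => hc j] at h
    simp at h
  obtain ⟨i, hi⟩ := hex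
  have hsplit := Finset.add_sum_erase Finset.univ (fun j => |n j - m j|) (Finset.mem_univ i)
  rw [← hsplit] at h
  have herest : 0 ≤ ∑ j ∈ Finset.univ.erase i, |n j - m j| :=
    Finset.sum_nonneg fun j _ => hnn j
  have hiabs : 0 ≤ |n i - m i| := hnn i
  have hi1 : |n i - m i| = 1 := by omega
  have hz : ∑ j ∈ Finset.univ.erase i, |n j - m j| = 0 := by omega
  have hrest : ∀ j, j ≠ i → n j = m j := by
    intro j hj
    have := (Finset.sum_eq_zero_iff_of_nonneg fun j _ => hnn j).mp hz j
      (Finset.mem_erase.mpr ⟨hj, Finset.mem_univ j⟩)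
    exact sub_eq_zero.mp (abs_eq_zero.mp this)
  refine ⟨i, ?_, hrest⟩
  rcases abs_eq (by norm_num : (0:ℤ) ≤ 1) |>.mp hi1 with hc | hc
  · right
    funext j
    by_cases hj : j = i
    · subst hj; simp [add_e_apply, e]; omega
    · simp [add_e_apply, e, hj, hrest j hj]
  · left
    funext j
    by_cases hj : j = i
    · subst hj; simp [add_e_apply, e]; omega
    · simp [add_e_apply, e, hj, (hrest j hj).symm]


section Eps

variable {r : ℕ}

/-- the sign of an edge increment, read off from the configuration -/
def eps (x : Site d → ZMod r) (n m : Site d) : ℤ := if x m - x n = 1 then 1 else -1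

lemma eps_one_or (x : Site d → ZMod r) (n m : Site d) : eps x n m = 1 ∨ eps x n m = -1 := by
  unfold eps; split <;> simp

lemma two_ne_zero' (hr3 : 3 ≤ r) : ((2 : ℤ) : ZMod r) ≠ 0 := by
  intro h
  have := (ZMod.intCast_zmod_eq_zero_iff_dvd 2 r).mp h
  have : (r : ℤ) ≤ 2 := Int.le_of_dvd (by norm_num) this
  omega

lemma sign_inj (hr3 : 3 ≤ r) {a b : ℤ} (ha : a = 1 ∨ a = -1) (hb : b = 1 ∨ b = -1)
    (h : (a : ZMod r) = b) : a = b := by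
  rcases ha with ha | ha <;> rcases hb with hb | hb <;> subst ha <;> subst hb <;> try rfl
  · exfalso
    apply two_ne_zero' hr3
    push_cast
    have h' : (1 : ZMod r) = -1 := by exact_mod_cast h
    linear_combination h'
  · exfalso
    apply two_ne_zero' hr3
    push_cast
    have h' : (1 : ZMod r) = -1 := by exact_mod_cast h.symm
    linear_combination h'

lemma eps_cast (hr3 : 3 ≤ r) {x : Site d → ZMod r} (hx : x ∈ Xr d r) {n m : Site d}
    (hadj : adjacent n m) : ((eps x n m : ℤ) : ZMod r) = x m - x n := by
  unfold eps
  rcases hx m n (adjacent_symm hadj) with h | h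
  · rw [if_pos h]; push_cast; exact h.symm
  · have h' : x m - x n = -1 := h
    rw [if_neg ?_]
    · push_cast; exact h'.symm
    · rw [h']
      intro hc
      apply two_ne_zero' hr3
      push_cast
      linear_combination -hc

lemma eq_of_small (hr3 : 3 ≤ r) (hr4 : r ≠ 4) {D : ℤ} (h1 : (r : ℤ) ∣ D) (h2 : 2 ∣ D)
    (h3 : |D| ≤ 4) : D = 0 := by
  by_contra hD
  have hDpos : 0 < |D| := abs_pos.mpr hD
  have hle : (r : ℤ) ≤ |D| := Int.le_of_dvd hDpos ((dvd_abs _ _).mpr h1)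
  have hr3' : (3 : ℤ) ≤ (r : ℤ) := by exact_mod_cast hr3
  have hreq : (r : ℤ) = 3 := by
    have : (r : ℤ) ≤ 4 := le_trans hle h3
    have hr4' : (r : ℤ) ≠ 4 := by exact_mod_cast fun h => hr4 (by exact_mod_cast h)
    omega
  rw [hreq] at h1
  have hco : IsCoprime (2 : ℤ) 3 := by
    rw [Int.isCoprime_iff_gcd_eq_one]; decide
  have h6 : (6 : ℤ) ∣ D := by
    have := hco.mul_dvd h2 h1
    norm_num at this
    exact this
  have : (6 : ℤ) ≤ |D| := Int.le_of_dvd hDpos ((dvd_abs _ _).mpr h6)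
  omega

lemma square (hr3 : 3 ≤ r) (hr4 : r ≠ 4) {x : Site d → ZMod r} (hx : x ∈ Xr d r)
    {i k : Fin d} (c : Site d) :
    eps x c (c + e i) + eps x (c + e i) (c + e i + e k) =
      eps x c (c + e k) + eps x (c + e k) (c + e i + e k) := by
  have hL : (((eps x c (c + e i) + eps x (c + e i) (c + e i + e k) : ℤ)) : ZMod r)
      = x (c + e i + e k) - x c := by
    push_cast
    rw [eps_cast hr3 hx (adj_step c i), eps_cast hr3 hx (adj_step (c + e i) k)]
    ring
  have hcomm : c + e k + e i = c + e i + e k := by ring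
  have hR : (((eps x c (c + e k) + eps x (c + e k) (c + e i + e k) : ℤ)) : ZMod r)
      = x (c + e i + e k) - x c := by
    push_cast
    have h2 : adjacent (c + e k) (c + e i + e k) := by
      rw [← hcomm]; exact adj_step (c + e k) i
    rw [eps_cast hr3 hx (adj_step c k), eps_cast hr3 hx h2]
    ring
  set L := eps x c (c + e i) + eps x (c + e i) (c + e i + e k) with hLdef
  set R := eps x c (c + e k) + eps x (c + e k) (c + e i + e k) with hRdef
  have hdvd : (r : ℤ) ∣ (L - R) := by
    rw [← ZMod.intCast_zmod_eq_zero_iff_dvd]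
    push_cast
    rw [hL, hR]
    ring
  have hpar : 2 ∣ (L - R) := by
    rcases eps_one_or x c (c + e i) with h1 | h1 <;>
    rcases eps_one_or x (c + e i) (c + e i + e k) with h2 | h2 <;>
    rcases eps_one_or x c (c + e k) with h3 | h3 <;>
    rcases eps_one_or x (c + e k) (c + e i + e k) with h4 | h4 <;>
    rw [hLdef, hRdef, h1, h2, h3, h4] <;> decide
  have hbnd : |L - R| ≤ 4 := by
    rcases eps_one_or x c (c + e i) with h1 | h1 <;>
    rcases eps_one_or x (c + e i) (c + e i + e k) with h2 | h2 <;>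
    rcases eps_one_or x c (c + e k) with h3 | h3 <;>
    rcases eps_one_or x (c + e k) (c + e i + e k) with h4 | h4 <;>
    rw [hLdef, hRdef, h1, h2, h3, h4] <;> decide
  have := eq_of_small hr3 hr4 hdvd hpar hbnd
  omega

end Eps

section IntSum

/-- signed sum `∑_{s=0}^{t-1} f s` for `t : ℤ` -/
noncomputable def intSum (f : ℤ → ℤ) (t : ℤ) : ℤ :=
  (∑ s ∈ Finset.Ico (0 : ℤ) t, f s) - ∑ s ∈ Finset.Ico t (0 : ℤ), f s

@[simp] lemma intSum_zero (f : ℤ → ℤ) : intSum f 0 = 0 := by simp [intSum]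

lemma intSum_succ (f : ℤ → ℤ) (t : ℤ) : intSum f (t + 1) = intSum f t + f t := by
  rcases le_or_gt 0 t with h | h
  · have h1 : Finset.Ico t (0 : ℤ) = ∅ := Finset.Ico_eq_empty (by omega)
    have h2 : Finset.Ico (t + 1) (0 : ℤ) = ∅ := Finset.Ico_eq_empty (by omega)
    have h3 : Finset.Ico (0 : ℤ) (t + 1) = insert t (Finset.Ico (0 : ℤ) t) := by
      ext s; simp [Finset.mem_Ico, Finset.mem_insert]; omega
    have h4 : t ∉ Finset.Ico (0 : ℤ) t := by simp
    simp [intSum, h1, h2, h3, Finset.sum_insert h4]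
    ring
  · have h1 : Finset.Ico (0 : ℤ) t = ∅ := Finset.Ico_eq_empty (by omega)
    have h2 : Finset.Ico (0 : ℤ) (t + 1) = ∅ := Finset.Ico_eq_empty (by omega)
    have h3 : Finset.Ico t (0 : ℤ) = insert t (Finset.Ico (t + 1) (0 : ℤ)) := by
      ext s; simp [Finset.mem_Ico, Finset.mem_insert]; omega
    have h4 : t ∉ Finset.Ico (t + 1) (0 : ℤ) := by simp
    simp [intSum, h1, h2, h3, Finset.sum_insert h4]

end IntSum

section Lift

variable {r : ℕ}

/-- sum of edge signs along the segment moving coordinate `i` from `0` to `t`,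
at base point `b` -/
noncomputable def seg (x : Site d → ZMod r) (i : Fin d) (b : Site d) (t : ℤ) : ℤ :=
  intSum (fun s => eps x (Function.update b i s) (Function.update b i (s + 1))) t

lemma update_add_e' {i k : Fin d} (hik : i ≠ k) (b : Site d) (s : ℤ) :
    Function.update (b + e k) i s = Function.update b i s + e k := by
  funext j
  by_cases h : j = i
  · subst h
    simp [Function.update_apply, e, Pi.add_apply, hik]
  · simp [Function.update_apply, e, Pi.add_apply, h]

lemma seg_shift (hr3 : 3 ≤ r) (hr4 : r ≠ 4) {x : Site d → ZMod r} (hx : x ∈ Xr d r)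
    {i k : Fin d} (hik : i ≠ k) (b : Site d) (t : ℤ) :
    seg x i (b + e k) t = seg x i b t
      + eps x (Function.update b i t) (Function.update b i t + e k)
      - eps x (Function.update b i 0) (Function.update b i 0 + e k) := by
  induction t using Int.induction_on with
  | zero => simp [seg]
  | succ n ih =>
      have h1 : seg x i (b + e k) ((n : ℤ) + 1) = seg x i (b + e k) n
          + eps x (Function.update (b + e k) i n) (Function.update (b + e k) i ((n : ℤ) + 1)) :=
        intSum_succ _ _
      have h2 : seg x i b ((n : ℤ) + 1) = seg x i b n
          + eps x (Function.update b i n) (Function.update b i ((n : ℤ) + 1)) :=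
        intSum_succ _ _
      set c := Function.update b i (n : ℤ) with hc
      have hup : Function.update b i ((n : ℤ) + 1) = c + e i := (update_add_e b i n).symm
      have hsq := square hr3 hr4 hx (i := i) (k := k) c
      rw [h1, h2, update_add_e' hik, update_add_e' hik, hup, ih]
      linarith [hsq]
  | pred n ih =>
      have h1 : seg x i (b + e k) (-(n : ℤ)) = seg x i (b + e k) (-(n : ℤ) - 1)
          + eps x (Function.update (b + e k) i (-(n : ℤ) - 1))
              (Function.update (b + e k) i (-(n : ℤ))) := by
        have := intSum_succ (fun s => eps x (Function.update (b + e k) i s)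
          (Function.update (b + e k) i (s + 1))) (-(n : ℤ) - 1)
        simpa [seg, sub_add_cancel] using this
      have h2 : seg x i b (-(n : ℤ)) = seg x i b (-(n : ℤ) - 1)
          + eps x (Function.update b i (-(n : ℤ) - 1)) (Function.update b i (-(n : ℤ))) := by
        have := intSum_succ (fun s => eps x (Function.update b i s)
          (Function.update b i (s + 1))) (-(n : ℤ) - 1)
        simpa [seg, sub_add_cancel] using this
      rw [update_add_e' hik, update_add_e' hik] at h1
      set c := Function.update b i (-(n : ℤ) - 1) with hc
      have hup : Function.update b i (-(n : ℤ)) = c + e i := by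
        rw [hc, update_add_e]
        norm_num
      rw [hup] at h1 h2 ih
      have hsq := square hr3 hr4 hx (i := i) (k := k) c
      linarith [h1, h2, ih, hsq]

/-- the canonical partial point: coordinates `< J` from `n`, rest `0` -/
def cpath (n : Site d) (J : ℕ) : Site d := fun l => if (l : ℕ) < J then n l else 0

/-- canonical lift of `x` normalized to vanish at the origin -/
noncomputable def lift0 (x : Site d → ZMod r) (n : Site d) : ℤ :=
  ∑ j : Fin d, seg x j (cpath n (j : ℕ)) (n j)

lemma update_cpath (n : Site d) (j : Fin d) :
    Function.update (cpath n (j : ℕ)) j (n j) = cpath n ((j : ℕ) + 1) := by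
  funext l
  by_cases h : l = j
  · subst h; simp [Function.update_apply, cpath]
  · have hne : (l : ℕ) ≠ (j : ℕ) := fun hh => h (Fin.ext hh)
    have hiff : ((l : ℕ) < (j : ℕ) + 1) ↔ ((l : ℕ) < (j : ℕ)) := by omega
    simp [Function.update_apply, cpath, h, hiff]

lemma update_cpath0 (n : Site d) (j : Fin d) :
    Function.update (cpath n (j : ℕ)) j 0 = cpath n (j : ℕ) := by
  have h0 : cpath n (j : ℕ) j = 0 := by simp [cpath]
  conv_rhs => rw [← Function.update_eq_self j (cpath n (j : ℕ))]
  rw [h0]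

lemma cpath_stable (n : Site d) (k : Fin d) (J : ℕ) (hJ : J ≤ (k : ℕ)) :
    cpath (n + e k) J = cpath n J := by
  funext l
  unfold cpath
  by_cases h : (l : ℕ) < J
  · have : l ≠ k := fun hh => by subst hh; omega
    simp [h, add_e_apply, e, this]
  · simp [h]

lemma cpath_shift (n : Site d) (k : Fin d) (J : ℕ) (hJ : (k : ℕ) < J) :
    cpath (n + e k) J = cpath n J + e k := by
  funext l
  unfold cpath
  by_cases h : (l : ℕ) < J
  · simp [h, add_e_apply, e, Pi.add_apply]
  · have : l ≠ k := fun hh => by subst hh; omega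
    simp [h, add_e_apply, e, Pi.add_apply, this]

lemma cpath_top (n : Site d) : cpath n d = n := by
  funext l
  simp [cpath, l.isLt]

def Hfun (x : Site d → ZMod r) (n : Site d) (k : Fin d) : ℕ → ℤ :=
  fun J => eps x (cpath n J) (cpath n J + e k)

def Dfun (x : Site d → ZMod r) (n : Site d) (k : Fin d) : ℕ → ℤ := fun J =>
  if J < (k : ℕ) then 0
  else if J = (k : ℕ) then Hfun x n k ((k : ℕ) + 1)
  else Hfun x n k (J + 1) - Hfun x n k J

lemma telescope (x : Site d → ZMod r) (n : Site d) (k : Fin d) :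
    ∀ N, (k : ℕ) < N → ∑ J ∈ Finset.range N, Dfun x n k J = Hfun x n k N := by
  intro N
  induction N with
  | zero => omega
  | succ N ih =>
      intro hN
      rw [Finset.sum_range_succ]
      rcases Nat.lt_succ_iff_lt_or_eq.mp hN with h | h
      · rw [ih h]
        unfold Dfun
        rw [if_neg (by omega), if_neg (by omega)]
        ring
      · have hzero : ∑ J ∈ Finset.range N, Dfun x n k J = 0 := by
          apply Finset.sum_eq_zero
          intro J hJ
          have := Finset.mem_range.mp hJ
          unfold Dfun
          rw [if_pos (by omega)]
        rw [hzero]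
        unfold Dfun
        rw [if_neg (by omega), if_pos h.symm, zero_add, ← h]

lemma lift0_step (hr3 : 3 ≤ r) (hr4 : r ≠ 4) {x : Site d → ZMod r} (hx : x ∈ Xr d r)
    (n : Site d) (k : Fin d) :
    lift0 x (n + e k) = lift0 x n + eps x n (n + e k) := by
  have key : ∀ j : Fin d,
      seg x j (cpath (n + e k) (j : ℕ)) ((n + e k) j)
        = seg x j (cpath n (j : ℕ)) (n j) + Dfun x n k (j : ℕ) := by
    intro j
    rcases lt_trichotomy ((j : ℕ)) ((k : ℕ)) with hlt | heq | hgt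
    · have hjk : j ≠ k := fun hh => by subst hh; omega
      rw [cpath_stable n k _ (le_of_lt hlt)]
      have hv : (n + e k) j = n j := by simp [add_e_apply, e, hjk]
      rw [hv]
      unfold Dfun
      rw [if_pos hlt]
      ring
    · have hjk : j = k := Fin.ext heq
      subst hjk
      rw [cpath_stable n j _ (le_refl _)]
      have hv : (n + e j) j = n j + 1 := by simp [add_e_apply, e]
      rw [hv]
      have hrec := intSum_succ (fun s => eps x (Function.update (cpath n (j : ℕ)) j s)
        (Function.update (cpath n (j : ℕ)) j (s + 1))) (n j)
      have hstep : seg x j (cpath n (j : ℕ)) (n j + 1)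
          = seg x j (cpath n (j : ℕ)) (n j)
            + eps x (Function.update (cpath n (j : ℕ)) j (n j))
                (Function.update (cpath n (j : ℕ)) j (n j) + e j) := by
        rw [update_add_e]
        exact hrec
      rw [hstep, update_cpath]
      unfold Dfun Hfun
      rw [if_neg (lt_irrefl _), if_pos rfl]
    · have hjk : j ≠ k := fun hh => by subst hh; omega
      rw [cpath_shift n k _ hgt]
      have hv : (n + e k) j = n j := by simp [add_e_apply, e, hjk]
      rw [hv]
      rw [seg_shift hr3 hr4 hx hjk]
      rw [update_cpath, update_cpath0]
      unfold Dfun Hfun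
      rw [if_neg (by omega), if_neg (by omega)]
      ring
  unfold lift0
  rw [Finset.sum_congr rfl fun j _ => key j, Finset.sum_add_distrib]
  congr 1
  have hconv : ∑ j : Fin d, Dfun x n k (j : ℕ) = ∑ J ∈ Finset.range d, Dfun x n k J :=
    Fin.sum_univ_eq_sum_range (fun J => Dfun x n k J) d
  rw [hconv, telescope x n k d k.isLt]
  unfold Hfun
  rw [cpath_top]

end Lift

section Sweep

variable {α : Type*}

lemma move_coord (g : Site d → α) (Good : Site d → Prop)
    (Hg : ∀ (b : Site d) (k : Fin d), Good b → Good (b + e k) → g (b + e k) = g b)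
    (i : Fin d) (b : Site d) (hall : ∀ u : ℤ, Good (Function.update b i u)) (s t : ℤ) :
    g (Function.update b i t) = g (Function.update b i s) := by
  refine Int.inductionOn' t s rfl (fun k _ ih => ?_) (fun k _ ih => ?_)
  · rw [← ih, ← update_add_e]
    apply Hg _ _ (hall k)
    rw [update_add_e]
    exact hall (k + 1)
  · rw [← ih]
    have h1 : Function.update b i (k - 1) + e i = Function.update b i k := by
      rw [update_add_e]; norm_num
    rw [← h1]
    exact (Hg _ _ (hall (k - 1)) (by rw [h1]; exact hall k)).symm

lemma sweep (g : Site d → α) (Good : Site d → Prop)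
    (Hg : ∀ (b : Site d) (k : Fin d), Good b → Good (b + e k) → g (b + e k) = g b)
    (n m : Site d)
    (hGood : ∀ (j : Fin d), n j ≠ m j → ∀ (u : ℤ),
      Good (fun l => if (l : ℕ) < (j : ℕ) then m l else if l = j then u else n l)) :
    g n = g m := by
  set q : ℕ → Site d := fun J l => if (l : ℕ) < J then m l else n l with hq
  have step : ∀ J : ℕ, g (q J) = g (q (J + 1)) := by
    intro J
    by_cases hJ : J < d
    · set j : Fin d := ⟨J, hJ⟩ with hj
      by_cases hnm : n j = m j
      · congr 1
        funext l
        simp only [hq]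
        rcases lt_trichotomy ((l : ℕ)) J with h | h | h
        · rw [if_pos h, if_pos (by omega)]
        · have hlj : l = j := Fin.ext (by simp [hj, h])
          rw [if_neg (by omega), if_pos (by omega), hlj, hnm]
        · rw [if_neg (by omega), if_neg (by omega)]
      · set B : Site d := fun l => if (l : ℕ) < J then m l else if l = j then 0 else n l with hB
        have hupd : ∀ u : ℤ, Function.update B j u
            = (fun l : Fin d => if (l : ℕ) < (j : ℕ) then m l else if l = j then u else n l) := by
          intro u
          funext l
          by_cases hl : l = j
          · subst hl
            simp [Function.update_apply, hj]
          · have : (l : ℕ) ≠ J := fun hh => hl (Fin.ext (by simp [hj, hh]))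
            simp only [Function.update_apply, hB, if_neg hl]
            all_goals simp [hj, hl]
        have h1 : q J = Function.update B j (n j) := by
          rw [hupd]
          funext l
          simp only [hq, hj]
          by_cases hl : l = j
          · subst hl; rw [if_pos hj, ← hj]
          · rw [if_neg (show ¬ l = ⟨J, hJ⟩ from fun hh => hl (hh.trans hj.symm))]
        have h2 : q (J + 1) = Function.update B j (m j) := by
          rw [hupd]
          funext l
          simp only [hq, hj]
          rcases lt_trichotomy ((l : ℕ)) J with h | h | h
          · rw [if_pos (by omega), if_pos (by omega)]
          · have hlj : l = j := Fin.ext (by simp [hj, h])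
            rw [if_pos (by omega), if_neg (by omega), if_pos hlj, hlj]
          · have hlj : l ≠ j := fun hh => by subst hh; simp [hj] at h
            rw [if_neg (by omega), if_neg (by omega), if_neg hlj]
        rw [h1, h2]
        exact move_coord g Good Hg j B (fun u => by rw [hupd u]; exact hGood j hnm u) (m j) (n j)
    · congr 1
      funext l
      have : (l : ℕ) < J := by have := l.isLt; omega
      simp only [hq]
      rw [if_pos this, if_pos (by omega)]
  have main : ∀ J : ℕ, g n = g (q J) := by
    intro J
    induction J with
    | zero =>
        have : q 0 = n := by
          funext l
          simp only [hq]
          rw [if_neg (by omega)]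
        rw [this]
    | succ J ih => rw [ih, step J]
  have hqd : q d = m := by
    funext l
    simp only [hq]
    rw [if_pos l.isLt]
  rw [main d, hqd]

end Sweep

section LiftMain

variable {r : ℕ}

/-- canonical lift of `x` normalized to take value `a` at `c` -/
noncomputable def lift (x : Site d → ZMod r) (c : Site d) (a : ℤ) : Site d → ℤ :=
  fun n => lift0 x n - lift0 x c + a

lemma lift_base (x : Site d → ZMod r) (c : Site d) (a : ℤ) : lift x c a c = a := by
  simp [lift]

lemma lift_step (hr3 : 3 ≤ r) (hr4 : r ≠ 4) {x : Site d → ZMod r} (hx : x ∈ Xr d r)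
    (c : Site d) (a : ℤ) (n : Site d) (k : Fin d) :
    lift x c a (n + e k) = lift x c a n + eps x n (n + e k) := by
  unfold lift
  rw [lift0_step hr3 hr4 hx n k]
  ring

lemma lift_heightFn (hr3 : 3 ≤ r) (hr4 : r ≠ 4) {x : Site d → ZMod r} (hx : x ∈ Xr d r)
    (c : Site d) (a : ℤ) : IsHeightFn (lift x c a) := by
  intro n m hadj
  obtain ⟨i, hcase, -⟩ := adj_cases hadj
  rcases hcase with hm | hn
  · subst hm
    rw [lift_step hr3 hr4 hx c a n i]
    have h0 : lift x c a n - (lift x c a n + eps x n (n + e i)) = -eps x n (n + e i) := by ring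
    rw [h0]
    rcases eps_one_or x n (n + e i) with h | h <;> rw [h] <;> norm_num
  · subst hn
    rw [lift_step hr3 hr4 hx c a m i]
    have h0 : lift x c a m + eps x m (m + e i) - lift x c a m = eps x m (m + e i) := by ring
    rw [h0]
    rcases eps_one_or x m (m + e i) with h | h <;> rw [h] <;> norm_num

lemma lift_cast (hr3 : 3 ≤ r) (hr4 : r ≠ 4) {x : Site d → ZMod r} (hx : x ∈ Xr d r)
    (c : Site d) (a : ℤ) (ha : ((a : ℤ) : ZMod r) = x c) (n : Site d) :
    ((lift x c a n : ℤ) : ZMod r) = x n := by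
  have Hg : ∀ (b : Site d) (k : Fin d), True → True →
      (fun q => ((lift x c a q : ℤ) : ZMod r) - x q) (b + e k)
        = (fun q => ((lift x c a q : ℤ) : ZMod r) - x q) b := by
    intro b k _ _
    simp only []
    rw [lift_step hr3 hr4 hx c a b k]
    push_cast
    rw [eps_cast hr3 hx (adj_step b k)]
    ring
  have hsw := sweep (fun q => ((lift x c a q : ℤ) : ZMod r) - x q) (fun _ => True) Hg n c
    (fun j _ u => trivial)
  rw [lift_base] at hsw
  rw [ha] at hsw
  have : ((lift x c a n : ℤ) : ZMod r) - x n = 0 := by rw [hsw]; ring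
  linear_combination this

lemma lift_liftsTo (hr3 : 3 ≤ r) (hr4 : r ≠ 4) {x : Site d → ZMod r} (hx : x ∈ Xr d r)
    (c : Site d) (a : ℤ) (ha : ((a : ℤ) : ZMod r) = x c) : LiftsTo (lift x c a) x :=
  ⟨lift_heightFn hr3 hr4 hx c a, lift_cast hr3 hr4 hx c a ha⟩

end LiftMain

lemma exists_bound (S : Set (Site d)) (hS : S.Finite) :
    ∃ M : ℤ, 0 ≤ M ∧ ∀ f ∈ S, ∀ j, |f j| ≤ M := by
  classical
  refine ⟨∑ f ∈ hS.toFinset, ∑ j, |f j|, ?_, ?_⟩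
  · exact Finset.sum_nonneg fun f _ => Finset.sum_nonneg fun j _ => abs_nonneg _
  · intro f hf j
    have h1 : |f j| ≤ ∑ j, |f j| :=
      Finset.single_le_sum (fun j _ => abs_nonneg (f j)) (Finset.mem_univ j)
    have h2 : ∑ j, |f j| ≤ ∑ f ∈ hS.toFinset, ∑ j, |f j| :=
      Finset.single_le_sum (f := fun g : Site d => ∑ j, |g j|)
        (fun g _ => Finset.sum_nonneg fun j _ => abs_nonneg _) (hS.mem_toFinset.mpr hf)
    exact le_trans h1 h2

lemma box_finite (M : ℤ) : ({p : Site d | ∀ j, |p j| ≤ M}).Finite := by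
  apply (Set.Finite.pi (fun _ : Fin d => Set.finite_Icc (-M) M)).subset
  intro p hp j _
  exact Set.mem_Icc.mpr (abs_le.mp (hp j))

lemma offbox_eq {α : Type*} (g : Site d → α) (Good : Site d → Prop)
    (Hg : ∀ (b : Site d) (k : Fin d), Good b → Good (b + e k) → g (b + e k) = g b)
    (M : ℤ) (hd : 2 ≤ d) (p : Site d) (i : Fin d)
    (hGood1 : ∀ q : Site d, q i = p i → Good q)
    (hGood2 : ∀ (q : Site d) (l : Fin d), l ≠ i → q l = M + 1 → Good q) :
    g p = g (fun _ => M + 1) := by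
  set p' : Site d := fun l => if l = i then p i else M + 1 with hp'def
  have h1 : g p = g p' := by
    apply sweep g Good Hg p p'
    intro j hne u
    have hji : j ≠ i := by
      intro hh; subst hh; apply hne; rw [hp'def]; simp
    apply hGood1
    by_cases hcase : (i : ℕ) < (j : ℕ)
    · rw [if_pos hcase, hp'def]; simp
    · rw [if_neg hcase, if_neg (fun hh : i = j => hji hh.symm)]
  have h2 : g p' = g (fun _ => M + 1) := by
    apply sweep g Good Hg p' (fun _ => M + 1)
    intro j hne u
    have hji : j = i := by
      by_contra hh
      apply hne
      rw [hp'def]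
      simp [hh]
    obtain ⟨l, hl⟩ : ∃ l : Fin d, l ≠ i := by
      by_cases h0 : (i : ℕ) = 0
      · refine ⟨⟨1, by omega⟩, fun hh => ?_⟩
        have hv := congrArg Fin.val hh
        simp at hv
        omega
      · refine ⟨⟨0, by omega⟩, fun hh => ?_⟩
        have hv := congrArg Fin.val hh
        simp at hv
        omega
    have hlj : l ≠ j := by rw [hji]; exact hl
    apply hGood2 _ l hl
    rcases lt_trichotomy ((l : ℕ)) ((j : ℕ)) with h | h | h
    · rw [if_pos h]
    · exact absurd (Fin.ext h) hlj
    · rw [if_neg (by omega), if_neg hlj, hp'def]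
      simp [hl]
  rw [h1, h2]

end HCA

/-- For `d ≥ 2` and a positive integer `r ∉ {1,2,4}`:
(1) homoclinic pairs in `X_r` admit homoclinic height-function lifts;
(2) two height functions agreeing at all but finitely many sites have even difference
everywhere;
(3) a pair in `X_r` differing at exactly one site `n₀` admits lifts agreeing off `n₀`
and differing by exactly `2` at `n₀`. -/
theorem homoclinic_height_lifts
    (d r : ℕ) (hd : 2 ≤ d) (hr0 : 0 < r) (hr1 : r ≠ 1) (hr2 : r ≠ 2) (hr4 : r ≠ 4) :
    (∀ x ∈ Xr d r, ∀ y ∈ Xr d r, {n : Site d | x n ≠ y n}.Finite →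
      ∃ hx hy : Site d → ℤ, LiftsTo hx x ∧ LiftsTo hy y ∧
        {n : Site d | hx n ≠ hy n}.Finite) ∧
    (∀ hx hy : Site d → ℤ, IsHeightFn hx → IsHeightFn hy →
      {n : Site d | hx n ≠ hy n}.Finite → ∀ n : Site d, 2 ∣ (hx n - hy n)) ∧
    (∀ x ∈ Xr d r, ∀ y ∈ Xr d r, ∀ n₀ : Site d,
      (∀ n : Site d, n ≠ n₀ → x n = y n) → x n₀ ≠ y n₀ →
      ∃ hx hy : Site d → ℤ, LiftsTo hx x ∧ LiftsTo hy y ∧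
        |hx n₀ - hy n₀| = 2 ∧ ∀ n : Site d, n ≠ n₀ → hx n = hy n) := by
  have hr3 : 3 ≤ r := by omega
  haveI : NeZero r := ⟨by omega⟩
  have hd0 : 0 < d := by omega
  refine ⟨?_, ?_, ?_⟩
  · -- Part 1
    intro x hx y hy hfin
    obtain ⟨M, hM0, hMb⟩ := HCA.exists_bound _ hfin
    have hcF : x (fun _ => M + 1) = y (fun _ => M + 1) := by
      by_contra hcc
      have h1 := hMb _ hcc ⟨0, hd0⟩
      rw [abs_of_nonneg (by omega)] at h1
      omega
    have hax : ((((x (fun _ => M + 1)).val : ℤ) : ZMod r)) = x (fun _ => M + 1) := by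
      push_cast
      exact ZMod.natCast_rightInverse (x (fun _ => M + 1))
    have hay : ((((x (fun _ => M + 1)).val : ℤ) : ZMod r)) = y (fun _ => M + 1) := by
      rw [hax, hcF]
    set a : ℤ := ((x (fun _ => M + 1)).val : ℤ) with hadef
    refine ⟨HCA.lift x (fun _ => M + 1) a, HCA.lift y (fun _ => M + 1) a,
      HCA.lift_liftsTo hr3 hr4 hx _ a hax, HCA.lift_liftsTo hr3 hr4 hy _ a hay, ?_⟩
    apply (HCA.box_finite M).subset
    intro p hp
    simp only [Set.mem_setOf_eq] at hp ⊢
    by_contra hpb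
    push_neg at hpb
    obtain ⟨i, hi⟩ := hpb
    apply hp
    have Hg : ∀ (b : Site d) (k : Fin d), x b = y b → x (b + HCA.e k) = y (b + HCA.e k) →
        (fun q => HCA.lift x (fun _ => M + 1) a q - HCA.lift y (fun _ => M + 1) a q) (b + HCA.e k)
          = (fun q => HCA.lift x (fun _ => M + 1) a q - HCA.lift y (fun _ => M + 1) a q) b := by
      intro b k h1 h2
      simp only []
      rw [HCA.lift_step hr3 hr4 hx _ a b k, HCA.lift_step hr3 hr4 hy _ a b k]
      have heps : HCA.eps x b (b + HCA.e k) = HCA.eps y b (b + HCA.e k) := by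
        unfold HCA.eps
        rw [h1, h2]
      rw [heps]
      ring
    have hkey := HCA.offbox_eq
      (fun q => HCA.lift x (fun _ => M + 1) a q - HCA.lift y (fun _ => M + 1) a q)
      (fun q => x q = y q) Hg M hd p i
      (fun q hq => by
        by_contra hxy
        have := hMb q hxy i
        rw [hq] at this
        omega)
      (fun q l _ hql => by
        by_contra hxy
        have := hMb q hxy l
        rw [hql, abs_of_nonneg (by omega)] at this
        omega)
    simp only [] at hkey
    rw [HCA.lift_base, HCA.lift_base] at hkey
    omega
  · -- Part 2
    intro hx hy hhx hhy hfin n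
    obtain ⟨M, hM0, hMb⟩ := HCA.exists_bound _ hfin
    have hcF : hx (fun _ => M + 1) = hy (fun _ => M + 1) := by
      by_contra hcc
      have h1 := hMb _ hcc ⟨0, hd0⟩
      rw [abs_of_nonneg (by omega)] at h1
      omega
    have Hg : ∀ (b : Site d) (k : Fin d), True → True →
        (fun q => ((hx q - hy q : ℤ) : ZMod 2)) (b + HCA.e k)
          = (fun q => ((hx q - hy q : ℤ) : ZMod 2)) b := by
      intro b k _ _
      simp only []
      have h1 := hhx (b + HCA.e k) b (HCA.adj_step' b k)
      have h2 := hhy (b + HCA.e k) b (HCA.adj_step' b k)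
      rcases (abs_eq (by norm_num : (0:ℤ) ≤ 1)).mp h1 with hu | hu <;>
      rcases (abs_eq (by norm_num : (0:ℤ) ≤ 1)).mp h2 with hv | hv <;>
      · have hD : (2 : ℤ) ∣ ((hx (b + HCA.e k) - hy (b + HCA.e k)) - (hx b - hy b)) := by omega
        have hz : ((((hx (b + HCA.e k) - hy (b + HCA.e k)) - (hx b - hy b) : ℤ)) : ZMod 2) = 0 :=
          (ZMod.intCast_zmod_eq_zero_iff_dvd _ 2).mpr (by exact_mod_cast hD)
        push_cast at hz ⊢
        linear_combination hz
    have hkey := HCA.offbox_eq (fun q => ((hx q - hy q : ℤ) : ZMod 2)) (fun _ => True) Hg M hd n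
      ⟨0, hd0⟩ (fun _ _ => trivial) (fun _ _ _ _ => trivial)
    rw [hcF, sub_self] at hkey
    have : (((hx n - hy n : ℤ)) : ZMod 2) = 0 := by
      rw [hkey]
      push_cast
      ring
    exact_mod_cast (ZMod.intCast_zmod_eq_zero_iff_dvd _ 2).mp this
  · -- Part 3
    intro x hx y hy n₀ hagree hne0
    set M : ℤ := 1 + ∑ j, |n₀ j| with hMdef
    have hM : ∀ j, |n₀ j| < M := by
      intro j
      have h1 : |n₀ j| ≤ ∑ j, |n₀ j| :=
        Finset.single_le_sum (fun j _ => abs_nonneg (n₀ j)) (Finset.mem_univ j)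
      omega
    have hcne : (fun _ : Fin d => M + 1) ≠ n₀ := by
      intro hh
      have h1 := congrFun hh ⟨0, hd0⟩
      have h2 := hM ⟨0, hd0⟩
      have h3 := le_abs_self (n₀ ⟨0, hd0⟩)
      omega
    have hcF : x (fun _ => M + 1) = y (fun _ => M + 1) := hagree _ hcne
    have hax : ((((x (fun _ => M + 1)).val : ℤ) : ZMod r)) = x (fun _ => M + 1) := by
      push_cast
      exact ZMod.natCast_rightInverse (x (fun _ => M + 1))
    have hay : ((((x (fun _ => M + 1)).val : ℤ) : ZMod r)) = y (fun _ => M + 1) := by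
      rw [hax, hcF]
    set a : ℤ := ((x (fun _ => M + 1)).val : ℤ) with hadef
    have Hg : ∀ (b : Site d) (k : Fin d), x b = y b → x (b + HCA.e k) = y (b + HCA.e k) →
        (fun q => HCA.lift x (fun _ => M + 1) a q - HCA.lift y (fun _ => M + 1) a q) (b + HCA.e k)
          = (fun q => HCA.lift x (fun _ => M + 1) a q - HCA.lift y (fun _ => M + 1) a q) b := by
      intro b k h1 h2
      simp only []
      rw [HCA.lift_step hr3 hr4 hx _ a b k, HCA.lift_step hr3 hr4 hy _ a b k]
      have heps : HCA.eps x b (b + HCA.e k) = HCA.eps y b (b + HCA.e k) := by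
        unfold HCA.eps
        rw [h1, h2]
      rw [heps]
      ring
    have claim : ∀ p : Site d, p ≠ n₀ →
        HCA.lift x (fun _ => M + 1) a p = HCA.lift y (fun _ => M + 1) a p := by
      intro p hpne
      obtain ⟨i, hpi⟩ : ∃ i, p i ≠ n₀ i := by
        by_contra hc
        push_neg at hc
        exact hpne (funext hc)
      have hkey := HCA.offbox_eq
        (fun q => HCA.lift x (fun _ => M + 1) a q - HCA.lift y (fun _ => M + 1) a q)
        (fun q => x q = y q) Hg M hd p i
        (fun q hq => hagree q (fun hh => hpi (by rw [← hq, hh])))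
        (fun q l _ hql => hagree q (fun hh => by
          have h2 := hM l
          have h3 := le_abs_self (n₀ l)
          rw [hh] at hql
          omega))
      simp only [] at hkey
      rw [HCA.lift_base, HCA.lift_base] at hkey
      omega
    refine ⟨HCA.lift x (fun _ => M + 1) a, HCA.lift y (fun _ => M + 1) a,
      HCA.lift_liftsTo hr3 hr4 hx _ a hax, HCA.lift_liftsTo hr3 hr4 hy _ a hay, ?_, claim⟩
    set i0 : Fin d := ⟨0, hd0⟩ with hi0
    set m : Site d := n₀ + HCA.e i0 with hmdef
    have hmne : m ≠ n₀ := by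
      intro hh
      have := congrFun hh i0
      rw [hmdef] at this
      simp [HCA.add_e_apply, HCA.e] at this
    have hxm := HCA.lift_step hr3 hr4 hx (fun _ => M + 1) a n₀ i0
    have hym := HCA.lift_step hr3 hr4 hy (fun _ => M + 1) a n₀ i0
    have heqm := claim m hmne
    rw [← hmdef] at hxm hym
    have hdiff : HCA.lift x (fun _ => M + 1) a n₀ - HCA.lift y (fun _ => M + 1) a n₀
        = HCA.eps y n₀ m - HCA.eps x n₀ m := by
      linear_combination heqm - hxm + hym
    have hepsne : HCA.eps x n₀ m ≠ HCA.eps y n₀ m := by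
      intro hsame
      apply hne0
      have hcx := HCA.eps_cast hr3 hx (HCA.adj_step n₀ i0)
      have hcy := HCA.eps_cast hr3 hy (HCA.adj_step n₀ i0)
      rw [← hmdef] at hcx hcy
      have hxym : x m = y m := hagree m hmne
      have hE : y m - y n₀ = x m - x n₀ := by
        rw [← hcy, ← hsame, hcx]
      linear_combination hxym + hE
    rw [hdiff]
    rcases HCA.eps_one_or x n₀ m with h1 | h1 <;> rcases HCA.eps_one_or y n₀ m with h2 | h2
    · exact absurd (h1.trans h2.symm) hepsne
    · rw [h1, h2]; norm_num
    · rw [h1, h2]; norm_num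
    · exact absurd (h1.trans h2.symm) hepsne
end

section
/- Fix d ≥ 2 and an integer r with r ∉ {1,2,4}, and let X_r ⊆ (ℤ/rℤ)^{ℤ^d} be the set of configurations x with x_n − x_m = ±1 (mod r) whenever ‖n−m‖₁ = 1. Then X_r has the pivot property: for any x,y ∈ X_r with x_n = y_n for all but finitely many n, there exist x = z⁽⁰⁾, z⁽¹⁾, …, z⁽ᴺ⁾ = y in X_r such that for each 0 ≤ k < N, z⁽ᵏ⁾ and z⁽ᵏ⁺¹⁾ differ at exactly one site of ℤ^d. -/
open scoped BigOperators

namespace XrPivot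

variable {d : ℕ}

/-- Unit vector in direction `i`. -/
def E (d : ℕ) (i : Fin d) : Site d := fun j => if j = i then 1 else 0

lemma smul_E_apply (a : ℤ) (i j : Fin d) :
    (a • E d i) j = if j = i then a else 0 := by
  simp [E, mul_ite]

lemma add_smul_E_apply (n : Site d) (a : ℤ) (i j : Fin d) :
    (n + a • E d i) j = n j + if j = i then a else 0 := by
  simp [E, mul_ite]

lemma add_E_apply (n : Site d) (i j : Fin d) :
    (n + E d i) j = n j + if j = i then 1 else 0 := rfl

lemma add_smul_E_add_smul_E (n : Site d) (a b : ℤ) (i : Fin d) :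
    n + a • E d i + b • E d i = n + (a + b) • E d i := by
  rw [add_assoc, ← add_smul]

lemma one_smul_E (i : Fin d) : (1 : ℤ) • E d i = E d i := one_smul _ _

lemma adjacent_add_E (n : Site d) (i : Fin d) : adjacent (n + E d i) n := by
  unfold adjacent
  have : ∀ j, |(n + E d i) j - n j| = if j = i then 1 else 0 := by
    intro j
    rw [add_E_apply]
    by_cases h : j = i <;> simp [h]
  rw [Finset.sum_congr rfl (fun j _ => this j)]
  simp

lemma adjacent_add_E' (n : Site d) (i : Fin d) : adjacent n (n + E d i) := by
  unfold adjacent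
  have : ∀ j, |n j - (n + E d i) j| = if j = i then 1 else 0 := by
    intro j
    rw [add_E_apply]
    by_cases h : j = i <;> simp [h]
  rw [Finset.sum_congr rfl (fun j _ => this j)]
  simp

/-- Characterization of adjacency. -/
lemma adjacent_iff_exists {n m : Site d} (h : adjacent n m) :
    ∃ i, m = n + E d i ∨ m = n + (-1 : ℤ) • E d i := by
  unfold adjacent at h
  have hne : ∃ i, n i ≠ m i := by
    by_contra hc
    push_neg at hc
    simp only [hc, sub_self, abs_zero, Finset.sum_const_zero] at h
    exact one_ne_zero h.symm
  obtain ⟨i, hi⟩ := hne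
  have h1 : |n i - m i| = 1 := by
    have hle : |n i - m i| ≤ 1 := by
      have := Finset.single_le_sum (f := fun j => |n j - m j|) (fun j _ => abs_nonneg _)
        (Finset.mem_univ i)
      omega
    have hge : 1 ≤ |n i - m i| := Int.one_le_abs (sub_ne_zero.mpr hi)
    omega
  have hrest : ∀ j, j ≠ i → n j = m j := by
    intro j hj
    have hsum : ∑ k ∈ Finset.univ.erase i, |n k - m k| = 0 := by
      have h2 := Finset.add_sum_erase Finset.univ (fun k => |n k - m k|) (Finset.mem_univ i)
      rw [h1, h] at h2
      omega
    have := (Finset.sum_eq_zero_iff_of_nonneg (fun k _ => abs_nonneg _)).mp hsum j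
      (Finset.mem_erase.mpr ⟨hj, Finset.mem_univ j⟩)
    have : n j - m j = 0 := abs_eq_zero.mp this
    omega
  rcases abs_eq (by norm_num : (0:ℤ) ≤ 1) |>.mp h1 with h2 | h2
  · refine ⟨i, Or.inr ?_⟩
    funext j
    rw [add_smul_E_apply]
    by_cases hj : j = i
    · subst hj; omega
    · simp [hj, hrest j hj]
  · refine ⟨i, Or.inl ?_⟩
    funext j
    rw [add_E_apply]
    by_cases hj : j = i
    · subst hj; omega
    · simp [hj, hrest j hj]

/-- Reachability: a function invariant under unit steps is constant. -/
lemma reach {α : Type*} (u : Site d → α) (hu : ∀ n i, u (n + E d i) = u n) :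
    ∀ n, u n = u 0 := by
  suffices h : ∀ N : ℕ, ∀ n : Site d, (∑ i, (n i).natAbs) = N → u n = u 0 by
    intro n; exact h _ n rfl
  intro N
  induction N using Nat.strong_induction_on with
  | _ N ih =>
    intro n hn
    by_cases h0 : ∀ i, n i = 0
    · have : n = 0 := funext h0
      rw [this]
    · push_neg at h0
      obtain ⟨i, hi⟩ := h0
      have split : ∀ m : Site d,
          (∑ j, (m j).natAbs) = (m i).natAbs + ∑ j ∈ Finset.univ.erase i, (m j).natAbs :=
        fun m => (Finset.add_sum_erase Finset.univ (fun j => (m j).natAbs)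
          (Finset.mem_univ i)).symm
      rcases lt_or_gt_of_ne hi with hneg | hpos
      · -- n i < 0 : step up
        have hstep : u n = u (n + E d i) := (hu n i).symm
        have herase : ∑ j ∈ Finset.univ.erase i, ((n + E d i) j).natAbs
            = ∑ j ∈ Finset.univ.erase i, (n j).natAbs := by
          refine Finset.sum_congr rfl (fun j hj => ?_)
          have hj' := (Finset.mem_erase.mp hj).1
          rw [add_E_apply]
          simp [hj']
        have hval : (n + E d i) i = n i + 1 := by rw [add_E_apply]; simp
        have hlt : (∑ j, ((n + E d i) j).natAbs) < N := by
          have h1 := split (n + E d i)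
          have h2 := split n
          rw [herase, hval] at h1
          omega
        rw [hstep]
        exact ih _ hlt _ rfl
      · -- n i > 0 : step down
        set m : Site d := n + (-1 : ℤ) • E d i with hm
        have hmn : m + E d i = n := by
          funext j
          rw [add_E_apply, hm, add_smul_E_apply]
          split_ifs <;> omega
        have hstep : u n = u m := by rw [← hmn, hu m i]
        have herase : ∑ j ∈ Finset.univ.erase i, (m j).natAbs
            = ∑ j ∈ Finset.univ.erase i, (n j).natAbs := by
          refine Finset.sum_congr rfl (fun j hj => ?_)
          have hj' := (Finset.mem_erase.mp hj).1
          rw [hm, add_smul_E_apply]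
          simp [hj']
        have hval : m i = n i - 1 := by rw [hm, add_smul_E_apply]; simp; omega
        have hlt : (∑ j, (m j).natAbs) < N := by
          have h1 := split m
          have h2 := split n
          rw [herase, hval] at h1
          omega
        rw [hstep]
        exact ih _ hlt _ rfl

/-! ### Integration of curl-free discrete 1-forms -/

/-- Sum of the 1-form `c` along the axis segment from `p` to `p + a • E i`. -/
def lineSum (c : Site d → Fin d → ℤ) (p : Site d) (i : Fin d) (a : ℤ) : ℤ :=
  (∑ t ∈ Finset.range a.toNat, c (p + (t : ℤ) • E d i) i)
  - ∑ t ∈ Finset.range (-a).toNat, c (p + (-(t+1) : ℤ) • E d i) i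

lemma lineSum_zero (c : Site d → Fin d → ℤ) (p : Site d) (i : Fin d) :
    lineSum c p i 0 = 0 := by simp [lineSum]

lemma lineSum_succ (c : Site d → Fin d → ℤ) (p : Site d) (i : Fin d) (a : ℤ) :
    lineSum c p i (a + 1) = lineSum c p i a + c (p + a • E d i) i := by
  rcases le_or_gt 0 a with ha | ha
  · have h1 : (a + 1).toNat = a.toNat + 1 := by omega
    have h2 : (-a).toNat = 0 := by omega
    have h3 : (-(a + 1)).toNat = 0 := by omega
    rw [lineSum, lineSum, h1, h2, h3, Finset.sum_range_succ]
    have h4 : ((a.toNat : ℤ)) = a := Int.toNat_of_nonneg ha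
    rw [h4]
    simp
  · have h1 : (a + 1).toNat = 0 := by omega
    have h2 : a.toNat = 0 := by omega
    have h3 : (-a).toNat = (-(a+1)).toNat + 1 := by omega
    rw [lineSum, lineSum, h1, h2, h3, Finset.sum_range_succ]
    have h4 : (((-(a+1)).toNat : ℤ)) = -(a+1) := Int.toNat_of_nonneg (by omega)
    have h5 : (-(((-(a+1)).toNat : ℤ) + 1)) = a := by omega
    rw [h5]
    simp

/-- The discrete plaquette (curl-free) condition. -/
def Plaq (c : Site d → Fin d → ℤ) : Prop :=
  ∀ n i j, c n i + c (n + E d i) j = c n j + c (n + E d j) i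

lemma lineSum_shift {c : Site d → Fin d → ℤ} (hc : Plaq c) (p : Site d) (i j : Fin d)
    (a : ℤ) :
    lineSum c (p + E d j) i a = lineSum c p i a + c (p + a • E d i) j - c p j := by
  induction a using Int.induction_on with
  | zero => simp [lineSum_zero]
  | succ k ihk =>
    rw [lineSum_succ, lineSum_succ, ihk]
    have hq := hc (p + (k : ℤ) • E d i) i j
    have e1 : p + E d j + (k : ℤ) • E d i = p + (k : ℤ) • E d i + E d j := by
      rw [add_right_comm]
    have e2 : p + ((k : ℤ) + 1) • E d i = p + (k : ℤ) • E d i + E d i := by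
      rw [add_smul, one_smul, ← add_assoc]
    rw [e1, e2]
    linarith
  | pred k ihk =>
    have hs1 := lineSum_succ c (p + E d j) i (-(k : ℤ) - 1)
    have hs2 := lineSum_succ c p i (-(k : ℤ) - 1)
    have he : (-(k : ℤ) - 1) + 1 = -(k : ℤ) := by ring
    rw [he] at hs1 hs2
    have hq := hc (p + (-(k : ℤ) - 1) • E d i) i j
    have e1 : p + E d j + (-(k : ℤ) - 1) • E d i = p + (-(k : ℤ) - 1) • E d i + E d j := by
      rw [add_right_comm]
    have e2 : p + (-(k : ℤ) - 1) • E d i + E d i = p + (-(k : ℤ)) • E d i := by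
      funext m
      rw [add_E_apply, add_smul_E_apply, add_smul_E_apply]
      split_ifs <;> omega
    rw [e1] at hs1
    rw [← e2] at ihk
    linarith

/-- Truncation: keep coordinates `< k`, zero the rest. -/
def Q (d : ℕ) (k : ℕ) (n : Site d) : Site d := fun j => if (j : ℕ) < k then n j else 0

lemma Q_apply (k : ℕ) (n : Site d) (j : Fin d) :
    Q d k n j = if (j : ℕ) < k then n j else 0 := rfl

lemma Q_top (n : Site d) : Q d d n = n := by
  funext j
  rw [Q_apply, if_pos j.isLt]

lemma Q_zero_right (k : ℕ) : Q d k (0 : Site d) = 0 := by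
  funext j
  rw [Q_apply]
  split_ifs <;> rfl

lemma Q_succ (n : Site d) (kf : Fin d) :
    Q d (kf : ℕ) n + n kf • E d kf = Q d ((kf : ℕ) + 1) n := by
  funext j
  rw [add_smul_E_apply, Q_apply, Q_apply]
  by_cases hj : j = kf
  · subst hj
    simp only [if_pos rfl]
    split_ifs <;> omega
  · rw [if_neg hj]
    have hj' : (j : ℕ) ≠ (kf : ℕ) := fun h => hj (Fin.ext h)
    split_ifs <;> omega

lemma Q_add_E_of_le (n : Site d) (jf : Fin d) (k : ℕ) (hk : k ≤ (jf : ℕ)) :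
    Q d k (n + E d jf) = Q d k n := by
  funext m
  rw [Q_apply, Q_apply, add_E_apply]
  by_cases hm : m = jf
  · subst hm; split_ifs <;> omega
  · simp [hm]

lemma Q_add_E_of_lt (n : Site d) (jf : Fin d) (k : ℕ) (hk : (jf : ℕ) < k) :
    Q d k (n + E d jf) = Q d k n + E d jf := by
  funext m
  rw [Q_apply, add_E_apply, add_E_apply, Q_apply]
  by_cases hm : m = jf
  · subst hm; split_ifs <;> omega
  · simp only [if_neg hm, add_zero]

/-- The potential of a 1-form, integrated along the staircase path from the origin. -/
def gpot (c : Site d → Fin d → ℤ) (n : Site d) : ℤ :=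
  ∑ k : Fin d, lineSum c (Q d (k : ℕ) n) k (n k)

lemma gpot_zero (c : Site d → Fin d → ℤ) : gpot c 0 = 0 := by
  unfold gpot
  refine Finset.sum_eq_zero (fun k _ => ?_)
  have : (0 : Site d) k = 0 := rfl
  rw [this, lineSum_zero]

lemma gpot_step {c : Site d → Fin d → ℤ} (hc : Plaq c) (n : Site d) (j : Fin d) :
    gpot c (n + E d j) = gpot c n + c n j := by
  set F : ℕ → ℤ := fun k => if (j : ℕ) < k then c (Q d k n) j else 0 with hF
  have key : ∀ kf : Fin d,
      lineSum c (Q d (kf : ℕ) (n + E d j)) kf ((n + E d j) kf)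
        - lineSum c (Q d (kf : ℕ) n) kf (n kf) = F ((kf : ℕ) + 1) - F (kf : ℕ) := by
    intro kf
    rcases lt_trichotomy (kf : ℕ) (j : ℕ) with hlt | heq | hgt
    · rw [Q_add_E_of_le n j (kf : ℕ) (le_of_lt hlt)]
      have hv : (n + E d j) kf = n kf := by
        rw [add_E_apply, if_neg (fun h => by rw [h] at hlt; omega), add_zero]
      rw [hv, hF]
      simp only
      rw [if_neg (by omega), if_neg (by omega)]
      ring
    · have hkj : kf = j := Fin.ext heq
      subst hkj
      rw [Q_add_E_of_le n kf (kf : ℕ) le_rfl]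
      have hv : (n + E d kf) kf = n kf + 1 := by
        rw [add_E_apply, if_pos rfl]
      rw [hv, lineSum_succ, Q_succ, hF]
      simp only
      rw [if_pos (by omega), if_neg (by omega)]
      ring
    · rw [Q_add_E_of_lt n j (kf : ℕ) hgt]
      have hv : (n + E d j) kf = n kf := by
        rw [add_E_apply, if_neg (fun h => by rw [h] at hgt; omega), add_zero]
      rw [hv, lineSum_shift hc, Q_succ, hF]
      simp only
      rw [if_pos (by omega), if_pos (by omega)]
      ring
  have hsum : gpot c (n + E d j) - gpot c n = ∑ kf : Fin d, (F ((kf : ℕ) + 1) - F (kf : ℕ)) := by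
    unfold gpot
    rw [← Finset.sum_sub_distrib]
    exact Finset.sum_congr rfl (fun kf _ => key kf)
  have htel : ∑ kf : Fin d, (F ((kf : ℕ) + 1) - F (kf : ℕ)) = F d - F 0 := by
    rw [Fin.sum_univ_eq_sum_range (fun k => F (k + 1) - F k) d]
    exact Finset.sum_range_sub F d
  have hFd : F d = c n j := by
    rw [hF]
    simp only
    rw [if_pos j.isLt, Q_top]
  have hF0 : F 0 = 0 := by rw [hF]; simp
  rw [htel, hFd, hF0] at hsum
  omega

lemma sub_E_add_E (n : Site d) (i : Fin d) : n + (-1 : ℤ) • E d i + E d i = n := by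
  funext j
  rw [add_E_apply, add_smul_E_apply]
  split_ifs <;> omega

/-! ### Height functions -/

/-- A height function: unit increments along edges. -/
def IsHeight (d : ℕ) (h : Site d → ℤ) : Prop :=
  ∀ n i, h (n + E d i) - h n = 1 ∨ h (n + E d i) - h n = -1

lemma IsHeight.add_const {h : Site d → ℤ} (hh : IsHeight d h) (v : ℤ) :
    IsHeight d (fun n => h n + v) := by
  intro n i
  have := hh n i
  dsimp only
  omega

/-- A height function gives a point of `Xr`. -/
lemma height_mem_Xr (r : ℕ) {h : Site d → ℤ} (hh : IsHeight d h) (a : ZMod r) :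
    (fun n => a + ((h n : ℤ) : ZMod r)) ∈ Xr d r := by
  intro n m hadj
  obtain ⟨i, hi | hi⟩ := adjacent_iff_exists hadj
  · subst hi
    rcases hh n i with h1 | h1
    · right
      have : h (n + E d i) = h n + 1 := by omega
      dsimp only
      rw [this]
      push_cast
      ring
    · left
      have : h (n + E d i) = h n - 1 := by omega
      dsimp only
      rw [this]
      push_cast
      ring
  · subst hi
    rcases hh (n + (-1 : ℤ) • E d i) i with h1 | h1 <;>
      rw [sub_E_add_E] at h1
    · left
      have : h n = h (n + (-1 : ℤ) • E d i) + 1 := by omega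
      dsimp only
      rw [this]
      push_cast
      ring
    · right
      have : h n = h (n + (-1 : ℤ) • E d i) - 1 := by omega
      dsimp only
      rw [this]
      push_cast
      ring

/-! ### Lifting points of `Xr` to height functions -/

section Lift

variable {r : ℕ}

/-- The increment 1-form of a configuration. -/
def delta (r : ℕ) (x : Site d → ZMod r) (n : Site d) (i : Fin d) : ℤ :=
  if x (n + E d i) - x n = 1 then 1 else -1

lemma delta_cases (x : Site d → ZMod r) (n : Site d) (i : Fin d) :
    delta r x n i = 1 ∨ delta r x n i = -1 := by
  unfold delta; split_ifs <;> simp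

lemma delta_cast {x : Site d → ZMod r} (hx : x ∈ Xr d r) (n : Site d) (i : Fin d) :
    ((delta r x n i : ℤ) : ZMod r) = x (n + E d i) - x n := by
  unfold delta
  split_ifs with h
  · rw [h]; norm_num
  · rcases hx (n + E d i) n (adjacent_add_E n i) with h1 | h1
    · exact absurd h1 h
    · rw [h1]; norm_num

lemma no_small_dvd {r : ℕ} (hr3 : 3 ≤ r) (hr4 : r ≠ 4) {k : ℤ} (hk : (r : ℤ) ∣ k)
    (h2 : k = 2 ∨ k = -2 ∨ k = 4 ∨ k = -4) : False := by
  have hnd : r ∣ k.natAbs := by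
    have := Int.natAbs_dvd_natAbs.mpr hk
    simpa using this
  have habs : k.natAbs = 2 ∨ k.natAbs = 4 := by
    rcases h2 with h | h | h | h <;> rw [h] <;> norm_num
  have hle : r ≤ k.natAbs := Nat.le_of_dvd (by omega) hnd
  have hr : r = 3 := by omega
  subst hr
  omega

lemma plaq_delta (hr3 : 3 ≤ r) (hr4 : r ≠ 4) {x : Site d → ZMod r} (hx : x ∈ Xr d r) :
    Plaq (delta r x) := by
  intro n i j
  have e : n + E d j + E d i = n + E d i + E d j := add_right_comm _ _ _
  have hcast : (((delta r x n i + delta r x (n + E d i) j)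
      - (delta r x n j + delta r x (n + E d j) i) : ℤ) : ZMod r) = 0 := by
    push_cast
    rw [delta_cast hx n i, delta_cast hx (n + E d i) j, delta_cast hx n j,
      delta_cast hx (n + E d j) i, e]
    ring
  have hdvd : (r : ℤ) ∣ ((delta r x n i + delta r x (n + E d i) j)
      - (delta r x n j + delta r x (n + E d j) i)) :=
    (ZMod.intCast_zmod_eq_zero_iff_dvd _ r).mp hcast
  rcases delta_cases x n i with h1 | h1 <;>
    rcases delta_cases x (n + E d i) j with h2 | h2 <;>
    rcases delta_cases x n j with h3 | h3 <;>
    rcases delta_cases x (n + E d j) i with h4 | h4 <;>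
    rw [h1, h2, h3, h4] at hdvd ⊢ <;>
    first
      | omega
      | (exfalso; refine no_small_dvd hr3 hr4 hdvd ?_; norm_num)

/-- Every point of `Xr` lifts to a height function. -/
lemma exists_height (hr3 : 3 ≤ r) (hr4 : r ≠ 4) {x : Site d → ZMod r} (hx : x ∈ Xr d r) :
    ∃ h : Site d → ℤ, IsHeight d h ∧ h 0 = 0 ∧
      ∀ n, ((h n : ℤ) : ZMod r) = x n - x 0 := by
  have hcplq := plaq_delta hr3 hr4 hx
  refine ⟨gpot (delta r x), ?_, gpot_zero _, ?_⟩
  · intro n i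
    rw [gpot_step hcplq]
    have := delta_cases x n i
    omega
  · have hreach := reach (fun n => ((gpot (delta r x) n : ℤ) : ZMod r) - (x n - x 0))
      (by
        intro n i
        rw [gpot_step hcplq]
        push_cast
        rw [delta_cast hx n i]
        ring)
    intro n
    have h0 := hreach n
    rw [gpot_zero] at h0
    have : ((gpot (delta r x) n : ℤ) : ZMod r) - (x n - x 0) = 0 := by
      rw [h0]; push_cast; ring
    linear_combination this

end Lift

lemma add_smul_E_succ (p : Site d) (j : Fin d) (a : ℤ) :
    p + a • E d j + E d j = p + (a + 1) • E d j := by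
  funext m
  rw [add_E_apply, add_smul_E_apply, add_smul_E_apply]
  split_ifs <;> omega

/-- Far off the finite difference region: some coordinate is at least `M` in absolute value. -/
def Out (d M : ℕ) (n : Site d) : Prop := ∃ i, M ≤ (n i).natAbs

/-- Parity: two height functions agreeing somewhere have even difference everywhere. -/
lemma height_diff_even {Hx Hy : Site d → ℤ} (hx : IsHeight d Hx) (hy : IsHeight d Hy)
    {m : Site d} (hm : Hx m = Hy m) : ∀ n, 2 ∣ Hx n - Hy n := by
  have hreach := reach (fun n => ((Hx n - Hy n : ℤ) : ZMod 2)) (by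
    intro n i
    rw [ZMod.intCast_eq_intCast_iff]
    rw [Int.ModEq]
    have h1 := hx n i
    have h2 := hy n i
    omega)
  intro n
  have h1 := hreach n
  have h2 := hreach m
  rw [hm, sub_self] at h2
  rw [← h2] at h1
  have h4 : ((Hx n - Hy n : ℤ) : ZMod 2) = 0 := by rw [h1]; norm_cast
  rwa [ZMod.intCast_zmod_eq_zero_iff_dvd] at h4

section OutConst

variable {u : Site d → ℤ} {M : ℕ}

/-- Invariance along a coordinate segment staying in the `Out` region. -/
lemma segment_const
    (H : ∀ (n : Site d) (i : Fin d), Out d M n → Out d M (n + E d i) → u (n + E d i) = u n)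
    (p : Site d) (j : Fin d) :
    ∀ a : ℤ, (∀ s : ℤ, (0 ≤ s ∧ s ≤ a) ∨ (a ≤ s ∧ s ≤ 0) → Out d M (p + s • E d j)) →
      u (p + a • E d j) = u p := by
  intro a
  induction a using Int.induction_on with
  | zero =>
    intro _
    rw [zero_smul, add_zero]
  | succ k ihk =>
    intro hout
    have e1 : p + ((k : ℤ) + 1) • E d j = p + (k : ℤ) • E d j + E d j :=
      (add_smul_E_succ p j (k : ℤ)).symm
    rw [e1, H (p + (k : ℤ) • E d j) j (hout _ (by omega)) (by rw [add_smul_E_succ]; exact hout _ (by omega))]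
    exact ihk (fun s hs => hout s (by omega))
  | pred k ihk =>
    intro hout
    have e1 : p + (-(k : ℤ) - 1) • E d j + E d j = p + (-(k : ℤ)) • E d j := by
      rw [add_smul_E_succ]
      norm_num
    have h2 := H (p + (-(k : ℤ) - 1) • E d j) j (hout _ (by omega)) (by rw [e1]; exact hout _ (by omega))
    rw [e1] at h2
    rw [← h2]
    exact ihk (fun s hs => hout s (by omega))

/-- Setting one coordinate of an `Out` point (witnessed by another coordinate). -/
lemma set_coord_const
    (H : ∀ (n : Site d) (i : Fin d), Out d M n → Out d M (n + E d i) → u (n + E d i) = u n)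
    (p : Site d) (j : Fin d) (b : ℤ) (i : Fin d) (hij : i ≠ j) (hi : M ≤ (p i).natAbs) :
    u (p + (b - p j) • E d j) = u p := by
  refine segment_const H p j (b - p j) (fun s _ => ⟨i, ?_⟩)
  rw [add_smul_E_apply, if_neg hij, add_zero]
  exact hi

lemma out_const (hd : 2 ≤ d)
    (H : ∀ (n : Site d) (i : Fin d), Out d M n → Out d M (n + E d i) → u (n + E d i) = u n) :
    ∀ n, Out d M n → u n = u (fun _ => (M : ℤ)) := by
  have setAll : ∀ T : Finset (Fin d), ∀ n : Site d, ∀ i : Fin d, i ∉ T → M ≤ (n i).natAbs →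
      u (fun j => if j ∈ T then (M : ℤ) else n j) = u n := by
    intro T
    induction T using Finset.induction_on with
    | empty =>
      intro n i _ _
      have : (fun j => if j ∈ (∅ : Finset (Fin d)) then (M : ℤ) else n j) = n := by
        funext j; simp
      rw [this]
    | @insert a T ha ih =>
      intro n i hiT hni
      have hia : i ≠ a := fun h => hiT (h ▸ Finset.mem_insert_self a T)
      have hiT' : i ∉ T := fun h => hiT (Finset.mem_insert_of_mem h)
      set p : Site d := fun j => if j ∈ T then (M : ℤ) else n j with hp
      have h1 : u p = u n := ih n i hiT' hni
      have hpi : p i = n i := by rw [hp]; simp [hiT']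
      have h2 : u (p + ((M : ℤ) - p a) • E d a) = u p :=
        set_coord_const H p a (M : ℤ) i hia (by rw [hpi]; exact hni)
      have h3 : p + ((M : ℤ) - p a) • E d a
          = (fun j => if j ∈ insert a T then (M : ℤ) else n j) := by
        funext j
        rw [add_smul_E_apply]
        by_cases hja : j = a
        · subst hja
          simp [Finset.mem_insert_self]
        · rw [if_neg hja, add_zero]
          simp only [hp, Finset.mem_insert]
          by_cases hjT : j ∈ T <;> simp [hjT, hja]
      rw [h3] at h2
      rw [h2, h1]
  intro n hn
  obtain ⟨i, hi⟩ := hn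
  have hA := setAll (Finset.univ.erase i) n i (Finset.notMem_erase i _) hi
  set q : Site d := fun j => if j ∈ Finset.univ.erase i then (M : ℤ) else n j with hq
  haveI : Nontrivial (Fin d) := Fin.nontrivial_iff_two_le.mpr hd
  obtain ⟨i', hii'⟩ := exists_ne i
  have hqi' : q i' = (M : ℤ) := by
    rw [hq]; simp [Finset.mem_erase, hii']
  have h2 : u (q + ((M : ℤ) - q i) • E d i) = u q :=
    set_coord_const H q i (M : ℤ) i' hii' (by rw [hqi']; simp)
  have h3 : q + ((M : ℤ) - q i) • E d i = (fun _ => (M : ℤ)) := by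
    funext j
    rw [add_smul_E_apply]
    by_cases hji : j = i
    · subst hji; rw [if_pos rfl]; ring
    · rw [if_neg hji, add_zero, hq]
      simp [Finset.mem_erase, hji]
  rw [h3] at h2
  rw [h2, hA]

end OutConst

/-! ### Chains of single-site moves -/

/-- A chain of pivots in `Xr` between two configurations. -/
def Chain (d r : ℕ) (x y : Site d → ZMod r) : Prop :=
  ∃ (N : ℕ) (z : ℕ → Site d → ZMod r),
    z 0 = x ∧ z N = y ∧
    (∀ k ≤ N, z k ∈ Xr d r) ∧
    (∀ k < N, ∃! n : Site d, z k n ≠ z (k + 1) n)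

lemma chain_refl {r : ℕ} {x : Site d → ZMod r} (hx : x ∈ Xr d r) : Chain d r x x :=
  ⟨0, fun _ => x, rfl, rfl, fun _ _ => hx, fun k hk => absurd hk (Nat.not_lt_zero k)⟩

lemma chain_cons {r : ℕ} {x x' y : Site d → ZMod r} (hx : x ∈ Xr d r)
    (hstep : ∃! n, x n ≠ x' n) (h : Chain d r x' y) : Chain d r x y := by
  obtain ⟨N, z, h0, hN, hmem, hdiff⟩ := h
  refine ⟨N + 1, fun k => match k with | 0 => x | (k + 1) => z k, rfl, hN, ?_, ?_⟩
  · intro k hk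
    cases k with
    | zero => exact hx
    | succ k => exact hmem k (by omega)
  · intro k hk
    cases k with
    | zero =>
      show ∃! n, x n ≠ z 0 n
      rw [h0]
      exact hstep
    | succ k =>
      show ∃! n, z k n ≠ z (k + 1) n
      exact hdiff k (by omega)

lemma chain_symm {r : ℕ} {x y : Site d → ZMod r} (h : Chain d r x y) : Chain d r y x := by
  obtain ⟨N, z, h0, hN, hmem, hdiff⟩ := h
  refine ⟨N, fun k => z (N - k), by show z (N - 0) = y; rw [Nat.sub_zero, hN],
    by show z (N - N) = x; rw [Nat.sub_self, h0],
    fun k _ => hmem (N - k) (by omega), ?_⟩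
  intro k hk
  obtain ⟨n, hn, hu⟩ := hdiff (N - (k + 1)) (by omega)
  have he : N - (k + 1) + 1 = N - k := by omega
  rw [he] at hn hu
  exact ⟨n, Ne.symm hn, fun m hm => hu m (Ne.symm hm)⟩

/-! ### Finding a pivot site -/

lemma flip_site {Hx Hy : Site d → ℤ} (hhx : IsHeight d Hx) (hhy : IsHeight d Hy)
    (s : Finset (Site d)) (hoff : ∀ n ∉ s, Hx n = Hy n) (hne : ∃ m, Hy m < Hx m) :
    ∃ n, Hy n < Hx n ∧ (∀ i, Hx (n + E d i) = Hx n - 1)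
      ∧ (∀ i, Hx (n + (-1 : ℤ) • E d i) = Hx n - 1) := by
  classical
  set T := s.filter (fun n => Hy n < Hx n) with hT
  have hTne : T.Nonempty := by
    obtain ⟨m, hm⟩ := hne
    refine ⟨m, ?_⟩
    rw [hT, Finset.mem_filter]
    refine ⟨?_, hm⟩
    by_contra h
    have := hoff m h
    omega
  set W := (T.image (fun n => Hx n - Hy n)).max' (hTne.image _) with hW
  have hWle : ∀ p ∈ T, Hx p - Hy p ≤ W :=
    fun p hp => Finset.le_max' _ _ (Finset.mem_image_of_mem (fun n => Hx n - Hy n) hp)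
  have hWmem : W ∈ T.image (fun n => Hx n - Hy n) := Finset.max'_mem _ _
  set U := T.filter (fun n => Hx n - Hy n = W) with hU
  have hUne : U.Nonempty := by
    obtain ⟨p, hp, hpw⟩ := Finset.mem_image.mp hWmem
    exact ⟨p, Finset.mem_filter.mpr ⟨hp, hpw⟩⟩
  obtain ⟨n, hnU, hnmax⟩ := U.exists_max_image Hx hUne
  have hnT : n ∈ T := (Finset.mem_filter.mp hnU).1
  have hweq : Hx n - Hy n = W := (Finset.mem_filter.mp hnU).2
  have hylt : Hy n < Hx n := (Finset.mem_filter.mp hnT).2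
  have claim : ∀ m : Site d, (Hx m - Hx n = 1 ∨ Hx m - Hx n = -1) →
      (Hy m - Hy n = 1 ∨ Hy m - Hy n = -1) → Hx m = Hx n - 1 := by
    intro m hbx hby
    rcases hbx with h | h
    · exfalso
      have hm1 : Hy m < Hx m := by omega
      have hms : m ∈ s := by
        by_contra hc
        have := hoff m hc
        omega
      have hmT : m ∈ T := Finset.mem_filter.mpr ⟨hms, hm1⟩
      have hle := hWle m hmT
      have hmU : m ∈ U := Finset.mem_filter.mpr ⟨hmT, by omega⟩
      have := hnmax m hmU
      omega
    · omega
  refine ⟨n, hylt, fun i => claim (n + E d i) (hhx n i) (hhy n i), fun i => ?_⟩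
  have h1 := hhx (n + (-1 : ℤ) • E d i) i
  have h2 := hhy (n + (-1 : ℤ) • E d i) i
  rw [sub_E_add_E] at h1 h2
  refine claim _ ?_ ?_
  · rcases h1 with h | h
    · exact Or.inr (by omega)
    · exact Or.inl (by omega)
  · rcases h2 with h | h
    · exact Or.inr (by omega)
    · exact Or.inl (by omega)

/-! ### The pivot move -/

lemma two_ne_zero_zmod {r : ℕ} (hr3 : 3 ≤ r) : ((2 : ℤ) : ZMod r) ≠ 0 := by
  intro h
  have hdvd : (r : ℤ) ∣ 2 := (ZMod.intCast_zmod_eq_zero_iff_dvd _ r).mp h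
  have : r ∣ 2 := by exact_mod_cast hdvd
  have := Nat.le_of_dvd (by norm_num) this
  omega

lemma flip_all {r : ℕ} (hr3 : 3 ≤ r) {Hx Hy : Site d → ℤ} (hhx : IsHeight d Hx)
    (s : Finset (Site d)) (hoff : ∀ p ∉ s, Hx p = Hy p)
    {n : Site d} (hlt : Hy n < Hx n) (hnb : ∀ i, Hx (n + E d i) = Hx n - 1)
    (hnb' : ∀ i, Hx (n + (-1 : ℤ) • E d i) = Hx n - 1) (heven : 2 ∣ Hx n - Hy n) :
    IsHeight d (Function.update Hx n (Hx n - 2))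
    ∧ (∀ p ∉ s, Function.update Hx n (Hx n - 2) p = Hy p)
    ∧ (∑ p ∈ s, (Function.update Hx n (Hx n - 2) p - Hy p).natAbs) + 2
        = (∑ p ∈ s, (Hx p - Hy p).natAbs)
    ∧ (∀ a : ZMod r, ∃! m : Site d,
        (a + ((Hx m : ℤ) : ZMod r)) ≠ (a + ((Function.update Hx n (Hx n - 2) m : ℤ) : ZMod r))) := by
  classical
  have hns : n ∈ s := by
    by_contra hc
    have := hoff n hc
    omega
  set Hx' := Function.update Hx n (Hx n - 2) with hHx'
  have hup : ∀ p, Hx' p = if p = n then Hx n - 2 else Hx p := by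
    intro p
    rw [hHx', Function.update_apply]
  refine ⟨?_, ?_, ?_, ?_⟩
  · -- height
    intro p i
    by_cases hp : p = n
    · subst hp
      have hne : p + E d i ≠ p := by
        intro h
        have := congrFun h i
        rw [add_E_apply, if_pos rfl] at this
        omega
      rw [hup, hup, if_pos rfl, if_neg hne, hnb i]
      omega
    · by_cases hpe : p + E d i = n
      · have hpval : p = n + (-1 : ℤ) • E d i := by
          funext j
          rw [add_smul_E_apply]
          have := congrFun hpe j
          rw [add_E_apply] at this
          split_ifs with hj
          · rw [if_pos hj] at this; omega
          · rw [if_neg hj] at this; omega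
        rw [hup, hup, if_pos hpe, if_neg hp, hpval, hnb' i]
        omega
      · rw [hup, hup, if_neg hpe, if_neg hp]
        exact hhx p i
  · -- off s
    intro p hps
    have hpn : p ≠ n := fun h => (h ▸ hps) hns
    rw [hup, if_neg hpn]
    exact hoff p hps
  · -- sum decrease
    have h1 := Finset.add_sum_erase s (fun p => (Hx' p - Hy p).natAbs) hns
    have h2 := Finset.add_sum_erase s (fun p => (Hx p - Hy p).natAbs) hns
    have herase : ∑ p ∈ s.erase n, (Hx' p - Hy p).natAbs
        = ∑ p ∈ s.erase n, (Hx p - Hy p).natAbs := by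
      refine Finset.sum_congr rfl (fun p hp => ?_)
      rw [hup, if_neg (Finset.mem_erase.mp hp).1]
    have hn' : Hx' n = Hx n - 2 := by rw [hup, if_pos rfl]
    rw [herase] at h1
    have hW : 2 ≤ Hx n - Hy n := by omega
    have : (Hx' n - Hy n).natAbs + 2 = (Hx n - Hy n).natAbs := by
      rw [hn']
      omega
    omega
  · -- unique difference
    intro a
    refine ⟨n, ?_, ?_⟩
    · show a + ((Hx n : ℤ) : ZMod r) ≠ a + ((Hx' n : ℤ) : ZMod r)
      rw [hup, if_pos rfl]
      intro h
      have h2 : ((Hx n : ℤ) : ZMod r) = ((Hx n - 2 : ℤ) : ZMod r) := by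
        have := add_left_cancel h
        exact this
      have : ((2 : ℤ) : ZMod r) = 0 := by
        push_cast at h2 ⊢
        linear_combination h2
      exact two_ne_zero_zmod hr3 this
    · intro m hm
      by_contra hmn
      rw [hup, if_neg hmn] at hm
      exact hm rfl

/-! ### The main induction -/

lemma aux_chain {r : ℕ} (hd : 2 ≤ d) (hr3 : 3 ≤ r) :
    ∀ Φ : ℕ, ∀ (s : Finset (Site d)) (a : ZMod r) (Hx Hy : Site d → ℤ),
      IsHeight d Hx → IsHeight d Hy → (∀ n ∉ s, Hx n = Hy n) →
      (∀ n, 2 ∣ Hx n - Hy n) →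
      (∑ n ∈ s, (Hx n - Hy n).natAbs) ≤ Φ →
      Chain d r (fun n => a + ((Hx n : ℤ) : ZMod r)) (fun n => a + ((Hy n : ℤ) : ZMod r)) := by
  intro Φ
  induction Φ using Nat.strong_induction_on with
  | _ Φ ih =>
    intro s a Hx Hy hhx hhy hoff heven hsum
    by_cases heq : ∀ n, Hx n = Hy n
    · have : (fun n => a + ((Hx n : ℤ) : ZMod r)) = (fun n => a + ((Hy n : ℤ) : ZMod r)) := by
        funext n; rw [heq n]
      rw [this]
      exact chain_refl (height_mem_Xr r hhy a)
    · push_neg at heq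
      obtain ⟨n0, hn0⟩ := heq
      by_cases hcase : ∃ m, Hy m < Hx m
      · -- flip Hx down
        obtain ⟨n, hlt, hnb, hnb'⟩ := flip_site hhx hhy s hoff hcase
        obtain ⟨hh', hoff', hsum', huniq⟩ :=
          flip_all (r := r) hr3 hhx s hoff hlt hnb hnb' (heven n)
        have hns : n ∈ s := by
          by_contra hc
          have := hoff n hc
          omega
        have hterm : 2 ≤ (Hx n - Hy n).natAbs := by
          have := heven n
          omega
        have hbig : 2 ≤ ∑ p ∈ s, (Hx p - Hy p).natAbs := by
          have := Finset.single_le_sum (f := fun p => (Hx p - Hy p).natAbs)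
            (fun p _ => Nat.zero_le _) hns
          omega
        refine chain_cons (height_mem_Xr r hhx a) (huniq a) ?_
        refine ih (Φ - 1) (by omega) s a _ Hy hh' hhy hoff' ?_ (by omega)
        intro p
        by_cases hp : p = n
        · subst hp
          rw [Function.update_self]
          have := heven p
          omega
        · rw [Function.update_of_ne hp]
          exact heven p
      · -- flip Hy down
        push_neg at hcase
        have hcase' : ∃ m, Hx m < Hy m := ⟨n0, lt_of_le_of_ne (hcase n0) hn0⟩
        have hoff'' : ∀ p ∉ s, Hy p = Hx p := fun p hp => (hoff p hp).symm
        obtain ⟨n, hlt, hnb, hnb'⟩ := flip_site hhy hhx s hoff'' hcase'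
        obtain ⟨hh', hoff', hsum', huniq⟩ :=
          flip_all (r := r) hr3 hhy s hoff'' hlt hnb hnb'
            (by have := heven n; omega : 2 ∣ Hy n - Hx n)
        have hns : n ∈ s := by
          by_contra hc
          have := hoff n hc
          omega
        have hterm : 2 ≤ (Hx n - Hy n).natAbs := by
          have := heven n
          omega
        have hbig : 2 ≤ ∑ p ∈ s, (Hx p - Hy p).natAbs := by
          have := Finset.single_le_sum (f := fun p => (Hx p - Hy p).natAbs)
            (fun p _ => Nat.zero_le _) hns
          omega
        refine chain_symm (chain_cons (height_mem_Xr r hhy a) (huniq a) ?_)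
        have hsums : ∑ p ∈ s, (Function.update Hy n (Hy n - 2) p - Hx p).natAbs ≤ Φ - 1 := by
          have hflip : ∑ p ∈ s, (Hy p - Hx p).natAbs = ∑ p ∈ s, (Hx p - Hy p).natAbs :=
            Finset.sum_congr rfl (fun p _ => by omega)
          omega
        refine chain_symm ?_
        refine ih (Φ - 1) (by omega) s a Hx _ hhx hh' ?_ ?_ ?_
        · intro p hp
          exact (hoff' p hp).symm
        · intro p
          by_cases hpn : p = n
          · subst hpn
            rw [Function.update_self]
            have := heven p
            omega
          · rw [Function.update_of_ne hpn]
            exact heven p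
        · calc ∑ p ∈ s, (Hx p - Function.update Hy n (Hy n - 2) p).natAbs
              = ∑ p ∈ s, (Function.update Hy n (Hy n - 2) p - Hx p).natAbs :=
            Finset.sum_congr rfl (fun p _ => by omega)
          _ ≤ Φ - 1 := hsums

end XrPivot


open XrPivot in
/-- For `d ≥ 2` and a positive integer `r ∉ {1,2,4}`, the subshift `X_r`
has the pivot property: any two of its points differing at finitely many sites are
connected by a chain of points of `X_r` in which consecutive points differ at exactly
one site. -/
theorem Xr_pivot_property
    (d r : ℕ) (hd : 2 ≤ d) (hr0 : 0 < r) (hr1 : r ≠ 1) (hr2 : r ≠ 2) (hr4 : r ≠ 4)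
    (x y : Site d → ZMod r) (hx : x ∈ Xr d r) (hy : y ∈ Xr d r)
    (hdiff : {n : Site d | x n ≠ y n}.Finite) :
    ∃ (N : ℕ) (z : ℕ → Site d → ZMod r),
      z 0 = x ∧ z N = y ∧
      (∀ k ≤ N, z k ∈ Xr d r) ∧
      (∀ k < N, ∃! n : Site d, z k n ≠ z (k + 1) n) := by
  classical
  have hr3 : 3 ≤ r := by omega
  -- lift both configurations to height functions
  obtain ⟨hX, hXh, hX0, hXcast⟩ := exists_height hr3 hr4 hx
  obtain ⟨hY, hYh, hY0, hYcast⟩ := exists_height hr3 hr4 hy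
  -- a bound beyond the difference set
  obtain ⟨M, hMD⟩ : ∃ M : ℕ, ∀ n : Site d, x n ≠ y n → ∀ i, (n i).natAbs < M := by
    refine ⟨1 + ∑ p ∈ hdiff.toFinset, ∑ j, (p j).natAbs, fun n hn i => ?_⟩
    have hnD : n ∈ hdiff.toFinset := by rw [Set.Finite.mem_toFinset]; exact hn
    have h1 : (n i).natAbs ≤ ∑ j, (n j).natAbs :=
      Finset.single_le_sum (f := fun j => (n j).natAbs) (fun j _ => Nat.zero_le _)
        (Finset.mem_univ i)
    have h2 : (∑ j, (n j).natAbs) ≤ ∑ p ∈ hdiff.toFinset, ∑ j, (p j).natAbs :=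
      Finset.single_le_sum (f := fun p => ∑ j, (p j).natAbs) (fun p _ => Nat.zero_le _) hnD
    exact lt_of_le_of_lt (le_trans h1 h2) (lt_one_add _)
  have hOut_eq : ∀ n : Site d, Out d M n → x n = y n := by
    rintro n ⟨i, hi⟩
    by_contra hc
    have := hMD n hc i
    omega
  -- the relative height is locally constant far away
  have hstep : ∀ (n : Site d) (i : Fin d), Out d M n → Out d M (n + E d i) →
      (fun p => hX p - hY p) (n + E d i) = (fun p => hX p - hY p) n := by
    intro n i h1 h2
    dsimp only
    have hx1 : x n = y n := hOut_eq n h1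
    have hx2 : x (n + E d i) = y (n + E d i) := hOut_eq _ h2
    have hcast : (((hX (n + E d i) - hY (n + E d i)) - (hX n - hY n) : ℤ) : ZMod r) = 0 := by
      push_cast
      rw [hXcast, hXcast, hYcast, hYcast, hx1, hx2]
      ring
    have hdvd : (r : ℤ) ∣ ((hX (n + E d i) - hY (n + E d i)) - (hX n - hY n)) :=
      (ZMod.intCast_zmod_eq_zero_iff_dvd _ r).mp hcast
    have h1 := hXh n i
    have h2 := hYh n i
    have hkb : (hX (n + E d i) - hY (n + E d i)) - (hX n - hY n) = 0
        ∨ (hX (n + E d i) - hY (n + E d i)) - (hX n - hY n) = 2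
        ∨ (hX (n + E d i) - hY (n + E d i)) - (hX n - hY n) = -2 := by omega
    rcases hkb with h | h | h
    · omega
    all_goals {
      exfalso
      rw [h] at hdvd
      have hr2' : r ∣ 2 := by
        have := Int.natAbs_dvd_natAbs.mpr hdvd
        simpa using this
      have := Nat.le_of_dvd (by norm_num) hr2'
      omega }
  obtain ⟨v, hvconst⟩ : ∃ v : ℤ, ∀ n : Site d, Out d M n → hX n - hY n = v := by
    refine ⟨hX (fun _ => (M : ℤ)) - hY (fun _ => (M : ℤ)), fun n hn => ?_⟩
    exact out_const (u := fun p => hX p - hY p) hd hstep n hn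
  -- the adjusted second height function
  have hY'h : IsHeight d (fun n => hY n + v) := hYh.add_const v
  -- the finite region
  have hBfin : {n : Site d | ∀ i, (n i).natAbs ≤ M}.Finite := by
    refine Set.Finite.subset (Set.Finite.pi (fun i : Fin d =>
      Set.finite_Icc (-(M : ℤ)) (M : ℤ))) ?_
    intro n hn
    rw [Set.mem_pi]
    intro i _
    rw [Set.mem_Icc]
    have := hn i
    omega
  have hout_of_nots : ∀ n : Site d, n ∉ hBfin.toFinset → Out d M n := by
    intro n hn
    rw [Set.Finite.mem_toFinset] at hn
    simp only [Set.mem_setOf_eq, not_forall, not_le] at hn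
    obtain ⟨i, hi⟩ := hn
    exact ⟨i, by omega⟩
  have hoff : ∀ n ∉ hBfin.toFinset, hX n = hY n + v := by
    intro n hn
    have h1 := hvconst n (hout_of_nots n hn)
    omega
  haveI : Nonempty (Fin d) := ⟨⟨0, by omega⟩⟩
  -- parity
  have heven : ∀ n, 2 ∣ hX n - (hY n + v) := by
    refine height_diff_even hXh hY'h (m := fun _ => (M + 1 : ℤ)) ?_
    have hOut : Out d M (fun _ => (M + 1 : ℤ)) :=
      ⟨Classical.arbitrary (Fin d), by simp; omega⟩
    have h1 := hvconst _ hOut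
    omega
  -- identify the endpoints
  have hxid : x = fun n => x 0 + ((hX n : ℤ) : ZMod r) := by
    funext n
    rw [hXcast]
    ring
  have hcastv : ((v : ℤ) : ZMod r) = y 0 - x 0 := by
    have hOutM : Out d M (fun _ => (M : ℤ)) := ⟨Classical.arbitrary (Fin d), by simp⟩
    have hxyM : x (fun _ => (M : ℤ)) = y (fun _ => (M : ℤ)) := hOut_eq _ hOutM
    have h1 := hvconst _ hOutM
    rw [← h1]
    push_cast
    rw [hXcast, hYcast, hxyM]
    ring
  have hyid : y = fun n => x 0 + (((hY n + v : ℤ)) : ZMod r) := by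
    funext n
    have h1 : ((hY n + v : ℤ) : ZMod r) = ((hY n : ℤ) : ZMod r) + ((v : ℤ) : ZMod r) := by
      push_cast
      ring
    rw [h1, hYcast, hcastv]
    ring
  have hchain := aux_chain hd hr3 (∑ n ∈ hBfin.toFinset, (hX n - (hY n + v)).natAbs)
    hBfin.toFinset (x 0) hX (fun n => hY n + v) hXh hY'h hoff heven le_rfl
  rw [hxid, hyid]
  exact hchain
end

section
/- Fix d ≥ 2 and an integer r with r ∉ {1,2,4}, and let X_r ⊆ (ℤ/rℤ)^{ℤ^d} be the set of configurations x with x_n − x_m = ±1 (mod r) whenever ‖n−m‖₁ = 1. Let F ⊆ ℤ^d be finite and x,y,z,w ∈ X_r satisfy x|_{F^c} = y|_{F^c}, z|_{F^c} = w|_{F^c}, x|_{F∪∂F} = z|_{F∪∂F}, and y|_{F∪∂F} = w|_{F∪∂F}. If (x̂,ŷ) and (ẑ,ŵ) are pairs of height functions, each pair agreeing at all but finitely many sites, with x̂ ≡ x, ŷ ≡ y, ẑ ≡ z, ŵ ≡ w (mod r) pointwise, then x̂_n − ŷ_n = ẑ_n − ŵ_n for all n ∈ ℤ^d. -/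
open scoped BigOperators

lemma dvd_small (r : ℕ) (hr0 : 0 < r) (hr1 : r ≠ 1) (hr2 : r ≠ 2) (hr4 : r ≠ 4)
    (k : ℤ) (hdvd : (r : ℤ) ∣ k) (heven : 2 ∣ k) (hge : -4 ≤ k) (hle : k ≤ 4) : k = 0 := by
  have hn : r ∣ k.natAbs := Int.natCast_dvd_natCast.mp ((Int.dvd_natAbs).mpr hdvd)
  by_contra h0
  have hpos : 0 < k.natAbs := by omega
  have hler : r ≤ k.natAbs := Nat.le_of_dvd hpos hn
  have hr3 : r = 3 := by omega
  subst hr3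
  omega

lemma step_toward {d : ℕ} (n m : Site d) (i : Fin d) (hi : n i ≠ m i) :
    ∃ n' : Site d, adjacent n n' ∧
      (∑ j, (n' j - m j).natAbs) + 1 = ∑ j, (n j - m j).natAbs := by
  set s : ℤ := if n i < m i then 1 else -1 with hs
  refine ⟨Function.update n i (n i + s), ?_, ?_⟩
  · unfold adjacent
    rw [Finset.sum_eq_single i]
    · rw [Function.update_self]
      simp only [hs]
      split <;> norm_num
    · intro j _ hj
      rw [Function.update_of_ne hj]
      simp
    · intro h
      exact absurd (Finset.mem_univ i) h
  · rw [← Finset.sum_erase_add Finset.univ _ (Finset.mem_univ i),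
        ← Finset.sum_erase_add Finset.univ (fun j => (n j - m j).natAbs) (Finset.mem_univ i)]
    have he : ∑ j ∈ Finset.univ.erase i, (Function.update n i (n i + s) j - m j).natAbs
        = ∑ j ∈ Finset.univ.erase i, (n j - m j).natAbs := by
      apply Finset.sum_congr rfl
      intro j hj
      rw [Function.update_of_ne (Finset.ne_of_mem_erase hj)]
    rw [he, Function.update_self]
    have hkey : ((n i + s - m i).natAbs) + 1 = (n i - m i).natAbs := by
      simp only [hs]
      split <;> omega
    omega

lemma const_of_local {d : ℕ} (ψ : Site d → ℤ)
    (h : ∀ n m : Site d, adjacent n m → ψ n = ψ m) (m : Site d) :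
    ∀ (k : ℕ) (n : Site d), (∑ j, (n j - m j).natAbs) = k → ψ n = ψ m := by
  intro k
  induction k using Nat.strong_induction_on with
  | _ k ih =>
    intro n hn
    by_cases hnm : n = m
    · rw [hnm]
    · have hex : ∃ i, n i ≠ m i := by
        by_contra hc
        push_neg at hc
        exact hnm (funext hc)
      obtain ⟨i, hi⟩ := hex
      obtain ⟨n', hadj, hsum⟩ := step_toward n m i hi
      rw [h n n' hadj]
      exact ih _ (by omega) n' rfl

/-- For `d ≥ 2`, `r ∉ {1,2,4}`: if `x,y,z,w ∈ X_r` satisfy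
`x = y` and `z = w` off a finite set `F`, while `x = z` and `y = w` on `F ∪ ∂F`, then
the differences of homoclinic height-function lifts of `(x,y)` and of `(z,w)` coincide
at every site. -/
theorem height_diff_markovian
    (d r : ℕ) (hd : 2 ≤ d) (hr0 : 0 < r) (hr1 : r ≠ 1) (hr2 : r ≠ 2) (hr4 : r ≠ 4)
    (F : Set (Site d)) (hF : F.Finite)
    (x y z w : Site d → ZMod r)
    (hx : x ∈ Xr d r) (hy : y ∈ Xr d r) (hz : z ∈ Xr d r) (hw : w ∈ Xr d r)
    (hxy : ∀ n ∉ F, x n = y n) (hzw : ∀ n ∉ F, z n = w n)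
    (hxz : ∀ n ∈ F ∪ siteBdry F, x n = z n) (hyw : ∀ n ∈ F ∪ siteBdry F, y n = w n)
    (hx' hy' hz' hw' : Site d → ℤ)
    (hlx : LiftsTo hx' x) (hly : LiftsTo hy' y) (hlz : LiftsTo hz' z) (hlw : LiftsTo hw' w)
    (hfin1 : {n : Site d | hx' n ≠ hy' n}.Finite)
    (hfin2 : {n : Site d | hz' n ≠ hw' n}.Finite) :
    ∀ n : Site d, hx' n - hy' n = hz' n - hw' n := by
  obtain ⟨hhx, hcx⟩ := hlx
  obtain ⟨hhy, hcy⟩ := hly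
  obtain ⟨hhz, hcz⟩ := hlz
  obtain ⟨hhw, hcw⟩ := hlw
  -- the difference of differences
  have hdvd : ∀ n : Site d, (r : ℤ) ∣ (hx' n - hy' n - (hz' n - hw' n)) := by
    intro n
    rw [← ZMod.intCast_zmod_eq_zero_iff_dvd]
    have hcast : (((hx' n - hy' n - (hz' n - hw' n)) : ℤ) : ZMod r)
        = (x n - y n) - (z n - w n) := by
      push_cast
      rw [hcx, hcy, hcz, hcw]
    rw [hcast]
    by_cases hn : n ∈ F
    · rw [hxz n (Or.inl hn), hyw n (Or.inl hn)]
      ring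
    · rw [hxy n hn, hzw n hn]
      ring
  have hloc : ∀ n m : Site d, adjacent n m →
      (hx' n - hy' n - (hz' n - hw' n)) = (hx' m - hy' m - (hz' m - hw' m)) := by
    intro n m hnm
    have h1 := (abs_eq (by norm_num : (0:ℤ) ≤ 1)).mp (hhx n m hnm)
    have h2 := (abs_eq (by norm_num : (0:ℤ) ≤ 1)).mp (hhy n m hnm)
    have h3 := (abs_eq (by norm_num : (0:ℤ) ≤ 1)).mp (hhz n m hnm)
    have h4 := (abs_eq (by norm_num : (0:ℤ) ≤ 1)).mp (hhw n m hnm)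
    have hd2 : (r : ℤ) ∣ ((hx' n - hy' n - (hz' n - hw' n)) - (hx' m - hy' m - (hz' m - hw' m))) :=
      dvd_sub (hdvd n) (hdvd m)
    have hk0 : (hx' n - hy' n - (hz' n - hw' n)) - (hx' m - hy' m - (hz' m - hw' m)) = 0 := by
      rcases h1 with h1 | h1 <;> rcases h2 with h2 | h2 <;> rcases h3 with h3 | h3 <;>
        rcases h4 with h4 | h4 <;>
        exact dvd_small r hr0 hr1 hr2 hr4 _ hd2 (by omega) (by omega) (by omega)
    omega
  -- find a site where the difference vanishes
  haveI : Nonempty (Fin d) := ⟨⟨0, by omega⟩⟩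
  haveI : Infinite (Site d) := by infer_instance
  obtain ⟨n₀, hn₀⟩ := ((hfin1.union hfin2).infinite_compl).nonempty
  simp only [Set.mem_compl_iff, Set.mem_union, Set.mem_setOf_eq, not_or, not_not] at hn₀
  intro n
  have e1 := const_of_local (fun p => hx' p - hy' p - (hz' p - hw' p)) hloc n₀
    (∑ j, (n j - n₀ j).natAbs) n rfl
  omega
end
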